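/- arXiv:2004.11599 — 5 statements merged into one kernel-verified Lean document; each statement's English description precedes it below -/
import Mathlib

section
/- Let h₁,…,h_r be analytic vector fields on a nonempty open connected set U* ⊆ ℂⁿ. Then h₁,…,h_r are linearly dependent over the field 𝕃 of meromorphic functions on U* if and only if for every point y ∈ U* the vectors h₁(y),…,h_r(y) ∈ ℂⁿ are linearly dependent over ℂ. -/
open Finset Matrix

/-- Analytic vector fields: maps `ℂⁿ → ℂⁿ`. -/
abbrev VFa (n : ℕ) := (Fin n → ℂ) → (Fin n → ℂ)

/-- Lie bracket `[g,h](x) = Dh(x)g(x) − Dg(x)h(x)`. -/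
noncomputable def abr {n : ℕ} (g h : VFa n) : VFa n :=
  fun x => fderiv ℂ h x (g x) - fderiv ℂ g x (h x)

/-- `μ` is meromorphic on `U`: locally on `U` it is expressible as a quotient
of analytic functions (on the complement of the zero set of the denominator). -/
def MeromOnC {n : ℕ} (U : Set (Fin n → ℂ)) (μ : (Fin n → ℂ) → ℂ) : Prop :=
  ∀ y ∈ U, ∃ V : Set (Fin n → ℂ), IsOpen V ∧ y ∈ V ∧ V ⊆ U ∧
    ∃ a b : (Fin n → ℂ) → ℂ, AnalyticOnNhd ℂ a V ∧ AnalyticOnNhd ℂ b V ∧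
      (∃ z ∈ V, b z ≠ 0) ∧ ∀ z ∈ V, b z ≠ 0 → μ z = a z / b z

/-- `μ` is a nonzero element of the field of meromorphic functions on `U`:
it is nonvanishing on some nonempty open subset of `U`. -/
def MeromNonzero {n : ℕ} (U : Set (Fin n → ℂ)) (μ : (Fin n → ℂ) → ℂ) : Prop :=
  ∃ W : Set (Fin n → ℂ), IsOpen W ∧ W.Nonempty ∧ W ⊆ U ∧ ∀ z ∈ W, μ z ≠ 0

/-- `D` is a dense subset of `U`. -/
def DenseIn {n : ℕ} (U D : Set (Fin n → ℂ)) : Prop :=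
  D ⊆ U ∧ U ⊆ closure D

/-- The vector fields `h₁,…,h_r` are linearly dependent over the field `𝕃` of
meromorphic functions on `U`: there are meromorphic coefficients `μ_i`, not all
zero in `𝕃`, with `Σ μ_i h_i = 0` (as meromorphic vector fields, i.e. on a
dense subset of `U`). -/
def LinDepMerom {n r : ℕ} (U : Set (Fin n → ℂ)) (h : Fin r → VFa n) : Prop :=
  ∃ μ : Fin r → ((Fin n → ℂ) → ℂ),
    (∀ i, MeromOnC U (μ i)) ∧
    (∃ i, MeromNonzero U (μ i)) ∧
    ∃ D : Set (Fin n → ℂ), DenseIn U D ∧ ∀ z ∈ D, (∑ i, μ i z • h i z) = 0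


private lemma aux_det_analytic {n k : ℕ} {U : Set (Fin n → ℂ)}
    (M : Fin k → Fin k → (Fin n → ℂ) → ℂ)
    (hM : ∀ a b, AnalyticOnNhd ℂ (M a b) U) :
    AnalyticOnNhd ℂ (fun y => (Matrix.of fun a b => M a b y).det) U := by
  simp only [Matrix.det_apply]
  apply Finset.analyticOnNhd_fun_sum
  intro τ _
  have : (fun y => Equiv.Perm.sign τ • ∏ a, (Matrix.of fun a b => M a b y) (τ a) a)
      = fun y => ((Equiv.Perm.sign τ : ℤ) : ℂ) * ∏ a, M (τ a) a y := by
    funext y; rw [Units.smul_def, zsmul_eq_mul]; rfl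
  rw [this]
  exact analyticOnNhd_const.mul (Finset.analyticOnNhd_fun_prod _ (fun a _ => hM (τ a) a))

private lemma aux_eval_analytic {n : ℕ} {U : Set (Fin n → ℂ)} {f : (Fin n → ℂ) → (Fin n → ℂ)}
    (hf : AnalyticOnNhd ℂ f U) (m : Fin n) :
    AnalyticOnNhd ℂ (fun y => f y m) U := by
  have := (ContinuousLinearMap.proj (R := ℂ) (φ := fun _ : Fin n => ℂ) m).comp_analyticOnNhd hf
  exact this

private lemma aux_dep_iff_minors {n r : ℕ} (v : Fin r → (Fin n → ℂ)) :
    (∃ c : Fin r → ℂ, c ≠ 0 ∧ ∑ i, c i • v i = 0) ↔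
      ∀ φ : Fin r → Fin n, (Matrix.of fun a b => v b (φ a)).det = 0 := by
  constructor
  · rintro ⟨c, hc, hsum⟩ φ
    rw [← Matrix.exists_mulVec_eq_zero_iff]
    refine ⟨c, hc, ?_⟩
    funext a
    have := congrFun hsum (φ a)
    simpa [Matrix.mulVec, dotProduct, mul_comm] using this
  · intro hmin
    by_contra hc
    push_neg at hc
    have hv : LinearIndependent ℂ v := by
      rw [Fintype.linearIndependent_iff]
      intro g hg
      by_contra hgg
      push_neg at hgg
      obtain ⟨i, hi⟩ := hgg
      exact hc g (fun h0 => hi (congrFun h0 i)) hg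
    set w : Fin n → (Fin r → ℂ) := fun a b => v b a with hw
    have hws : Submodule.span ℂ (Set.range w) = ⊤ := by
      set M : Matrix (Fin r) (Fin n) ℂ := Matrix.of fun b a => v b a with hM
      have h1 : Mᵀ.rank = r := by
        rw [Matrix.rank_eq_finrank_span_cols]
        have : Mᵀ.col = fun b => v b := rfl
        rw [this, finrank_span_eq_card hv]
        simp
      have h2 : M.rank = Module.finrank ℂ (Submodule.span ℂ (Set.range w)) := by
        rw [Matrix.rank_eq_finrank_span_cols]; rfl
      have h3 : M.rank = r := by rw [← Matrix.rank_transpose]; exact h1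
      apply Submodule.eq_top_of_finrank_eq
      rw [← h2, h3]
      simp
    obtain ⟨b, hbsub, hbspan, hbind⟩ := exists_linearIndependent ℂ (Set.range w)
    rw [hws] at hbspan
    have hfin : b.Finite := (Set.range w).toFinite.subset hbsub
    have : Fintype b := hfin.fintype
    let B : Module.Basis b ℂ (Fin r → ℂ) := Module.Basis.mk hbind (by rw [Subtype.range_coe, hbspan])
    have hcard : Fintype.card b = r := by
      have := Module.finrank_eq_card_basis B
      simpa using this.symm
    let e : Fin r ≃ b := (Fintype.equivFinOfCardEq hcard).symm
    have hψ : ∀ x : b, ∃ a : Fin n, w a = (x : Fin r → ℂ) := fun x => hbsub x.2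
    choose ψ hψs using hψ
    set φ : Fin r → Fin n := fun a => ψ (e a) with hφ
    have hrows : LinearIndependent ℂ (fun a : Fin r => (Matrix.of fun a b => v b (φ a)) a) := by
      have : (fun a : Fin r => (Matrix.of fun a b => v b (φ a)) a)
          = fun a : Fin r => ((e a : Fin r → ℂ)) := by
        funext a
        exact hψs (e a)
      rw [this]
      exact hbind.comp e (Equiv.injective e)
    have := Matrix.linearIndependent_rows_iff_isUnit.mp hrows
    have hdet : IsUnit (Matrix.of fun a b => v b (φ a)).det :=
      (Matrix.isUnit_iff_isUnit_det _).mp this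
    exact hdet.ne_zero (hmin φ)

/-- Analytic vector fields `h₁,…,h_r` on a nonempty open
connected `U ⊆ ℂⁿ` are linearly dependent over the field of meromorphic
functions on `U` iff their values at every point of `U` are linearly dependent
over ℂ. -/
theorem stmt_0 {n r : ℕ} (U : Set (Fin n → ℂ)) (hUo : IsOpen U)
    (hUc : IsConnected U)
    (h : Fin r → VFa n) (hh : ∀ i, AnalyticOnNhd ℂ (h i) U) :
    LinDepMerom U h ↔
      ∀ y ∈ U, ∃ c : Fin r → ℂ, c ≠ 0 ∧ (∑ i, c i • h i y) = 0 := by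
  rw [LinDepMerom]
  constructor
  · rintro ⟨μ, hmer, ⟨j, hj⟩, D, hD, hrel⟩ y hy
    obtain ⟨W, hWo, hWne, hWU, hWnz⟩ := hj
    obtain ⟨hDU, hDd⟩ := hD
    refine (aux_dep_iff_minors (fun i => h i y)).mpr ?_
    intro φ
    set g : (Fin n → ℂ) → ℂ := fun z => (Matrix.of fun a b => h b z (φ a)).det with hgdef
    have hga : AnalyticOnNhd ℂ g U :=
      aux_det_analytic _ (fun a b => aux_eval_analytic (hh b) (φ a))
    have hgD : ∀ z ∈ D ∩ W, g z = 0 := by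
      rintro z ⟨hzD, hzW⟩
      have hc : (fun i => μ i z) ≠ 0 := fun h0 => hWnz z hzW (congrFun h0 j)
      exact (aux_dep_iff_minors (fun i => h i z)).mp ⟨_, hc, hrel z hzD⟩ φ
    have hgW : ∀ w ∈ W, g w = 0 := by
      intro w hw
      have hcl : w ∈ closure (D ∩ W) := by
        rw [mem_closure_iff]
        intro o ho hwo
        have hcD : w ∈ closure D := hDd (hWU hw)
        rw [mem_closure_iff] at hcD
        obtain ⟨z, hz1, hz2⟩ := hcD (o ∩ W) (ho.inter hWo) ⟨hwo, hw⟩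
        exact ⟨z, hz1.1, hz2, hz1.2⟩
      have hcont : ContinuousAt g w := (hga w (hWU hw)).continuousAt
      have hne : (nhdsWithin w (D ∩ W)).NeBot := mem_closure_iff_nhdsWithin_neBot.mp hcl
      have h1 : Filter.Tendsto g (nhdsWithin w (D ∩ W)) (nhds (g w)) :=
        hcont.continuousWithinAt
      have h2 : Filter.Tendsto g (nhdsWithin w (D ∩ W)) (nhds 0) := by
        apply Filter.Tendsto.congr' _ tendsto_const_nhds
        filter_upwards [self_mem_nhdsWithin] with z hz
        exact (hgD z hz).symm
      exact tendsto_nhds_unique h1 h2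
    obtain ⟨w₀, hw₀⟩ := hWne
    have hEq : Set.EqOn g 0 U := by
      apply hga.eqOn_zero_of_preconnected_of_eventuallyEq_zero hUc.isPreconnected (hWU hw₀)
      filter_upwards [hWo.mem_nhds hw₀] with z hz using hgW z hz
    exact hEq hy
  · intro hdep
    classical
    obtain ⟨y₀', hy₀'⟩ := hUc.nonempty
    set P : ℕ → Prop := fun k => ∃ σ : Fin k → Fin r, ∃ φ : Fin k → Fin n, ∃ y ∈ U,
      (Matrix.of fun a b => h (σ b) y (φ a)).det ≠ 0 with hPdef
    have hP0 : P 0 := ⟨Fin.elim0, Fin.elim0, y₀', hy₀', by simp [Matrix.det_fin_zero]⟩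
    have hPr : ¬ P r := by
      rintro ⟨σ, φ, y, hy, hdet⟩
      by_cases hσ : Function.Injective σ
      · have hbij : Function.Bijective σ := (Finite.injective_iff_bijective).mp hσ
        obtain ⟨c, hc, hsum⟩ := hdep y hy
        apply hdet
        rw [← Matrix.exists_mulVec_eq_zero_iff]
        refine ⟨c ∘ σ, ?_, ?_⟩
        · obtain ⟨i, hi⟩ := Function.ne_iff.mp hc
          obtain ⟨b, rfl⟩ := hbij.surjective i
          exact fun h0 => hi (congrFun h0 b)
        · funext a
          have hcf := congrFun hsum (φ a)
          simp only [Finset.sum_apply, Pi.smul_apply, smul_eq_mul, Pi.zero_apply] at hcf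
          rw [← Equiv.sum_comp (Equiv.ofBijective σ hbij) (fun i => c i * h i y (φ a))] at hcf
          simpa [Matrix.mulVec, dotProduct, mul_comm, Equiv.ofBijective] using hcf
      · obtain ⟨b1, b2, hσ12, hne⟩ := Function.not_injective_iff.mp hσ
        exact hdet (Matrix.det_zero_of_column_eq hne (fun a => by simp [hσ12]))
    set k : ℕ := Nat.findGreatest P r with hkdef
    have hPk : P k := Nat.findGreatest_spec (P := P) (Nat.zero_le r) hP0
    have hkr : k < r := lt_of_le_of_ne (Nat.findGreatest_le (P := P) r) (fun hkr => hPr (hkr ▸ hPk))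
    have hmax : ¬ P (k + 1) := Nat.findGreatest_is_greatest (P := P) (n := r) (by omega) (by omega)
    obtain ⟨σ, φ, y₀, hy₀, hΔ⟩ := hPk
    have hex : ∃ i₀ : Fin r, i₀ ∉ Finset.image σ Finset.univ := by
      by_contra hco
      push_neg at hco
      have hs : (Finset.univ : Finset (Fin r)) ⊆ Finset.image σ Finset.univ := fun i _ => hco i
      have := Finset.card_le_card hs
      have h2 := Finset.card_image_le (f := σ) (s := Finset.univ)
      simp only [Finset.card_univ, Fintype.card_fin] at this h2
      omega
    obtain ⟨i₀, hi₀⟩ := hex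
    set σ' : Fin (k+1) → Fin r := Fin.snoc σ i₀ with hσ'def
    set μ' : Fin (k+1) → (Fin n → ℂ) → ℂ := fun b z =>
      (-1 : ℂ) ^ (k + (b : ℕ)) *
        (Matrix.of fun a c => h (σ' (Fin.succAbove b c)) z (φ a)).det with hμ'def
    have hexp : ∀ z ∈ U, ∀ m : Fin n, ∑ b : Fin (k+1), μ' b z * h (σ' b) z m = 0 := by
      intro z hz m
      have hzero : (Matrix.of fun (a b : Fin (k+1)) => h (σ' b) z (Fin.snoc (α := fun _ => Fin n) φ m a)).det = 0 := by
        by_contra hne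
        exact hmax ⟨σ', (Fin.snoc (α := fun _ => Fin n) φ m : Fin (k+1) → Fin n), z, hz, hne⟩
      rw [Matrix.det_succ_row _ (Fin.last k)] at hzero
      refine Eq.trans ?_ hzero
      apply Finset.sum_congr rfl
      intro b _
      have hsub : (Matrix.of fun (a b : Fin (k+1)) => h (σ' b) z (Fin.snoc (α := fun _ => Fin n) φ m a)).submatrix
            (Fin.last k).succAbove b.succAbove
          = Matrix.of fun a c => h (σ' (Fin.succAbove b c)) z (φ a) := by
        ext a c
        simp [Fin.succAbove_last, Fin.snoc_castSucc]
      rw [hsub]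
      simp only [hμ'def, Matrix.of_apply, Fin.snoc_last, Fin.val_last]
      ring
    set μ : Fin r → (Fin n → ℂ) → ℂ :=
      fun i z => ∑ b : Fin (k+1), if σ' b = i then μ' b z else 0 with hμdef
    have hrelU : ∀ z ∈ U, ∑ i, μ i z • h i z = 0 := by
      intro z hz
      funext m
      simp only [Finset.sum_apply, Pi.smul_apply, smul_eq_mul, Pi.zero_apply, hμdef]
      calc ∑ i, (∑ b : Fin (k+1), if σ' b = i then μ' b z else 0) * h i z m
          = ∑ i, ∑ b : Fin (k+1), (if σ' b = i then μ' b z * h i z m else 0) := by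
            refine Finset.sum_congr rfl fun i _ => ?_
            rw [Finset.sum_mul]
            exact Finset.sum_congr rfl fun b _ => by rw [ite_mul, zero_mul]
        _ = ∑ b : Fin (k+1), ∑ i, (if σ' b = i then μ' b z * h i z m else 0) :=
            Finset.sum_comm
        _ = ∑ b : Fin (k+1), μ' b z * h (σ' b) z m := by
            refine Finset.sum_congr rfl fun b _ => ?_
            rw [Finset.sum_ite_eq]
            simp
        _ = 0 := hexp z hz m
    have hμ'a : ∀ b : Fin (k+1), AnalyticOnNhd ℂ (μ' b) U := by
      intro b
      exact analyticOnNhd_const.mul (aux_det_analytic _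
        (fun a c => aux_eval_analytic (hh _) (φ a)))
    have hμa : ∀ i, AnalyticOnNhd ℂ (μ i) U := by
      intro i
      apply Finset.analyticOnNhd_fun_sum
      intro b _
      by_cases hb : σ' b = i
      · simpa [hb] using hμ'a b
      · simp only [hb, if_false]
        exact analyticOnNhd_const
    have hmero : ∀ i, MeromOnC U (μ i) := by
      intro i y hy
      exact ⟨U, hUo, hy, subset_rfl, μ i, fun _ => 1, hμa i, analyticOnNhd_const,
        ⟨y, hy, one_ne_zero⟩, fun z hz _ => (div_one _).symm⟩
    have hμi₀ : ∀ z, μ i₀ z = (Matrix.of fun a b => h (σ b) z (φ a)).det := by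
      intro z
      simp only [hμdef]
      rw [Finset.sum_eq_single (Fin.last k)]
      · have h1 : σ' (Fin.last k) = i₀ := by simp [hσ'def]
        rw [if_pos h1]
        simp only [hμ'def]
        have h3 : (Matrix.of fun a c => h (σ' ((Fin.last k).succAbove c)) z (φ a))
            = Matrix.of fun a c => h (σ c) z (φ a) := by
          ext a c
          simp [hσ'def, Fin.succAbove_last, Fin.snoc_castSucc]
        rw [h3, Fin.val_last,
          show (-1 : ℂ) ^ (k + k) = 1 by rw [← two_mul, pow_mul]; norm_num, one_mul]
      · intro b _ hb
        rw [if_neg]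
        intro hbi
        obtain ⟨b', rfl⟩ := Fin.exists_castSucc_eq.mpr hb
        rw [hσ'def, Fin.snoc_castSucc] at hbi
        exact hi₀ (Finset.mem_image.mpr ⟨b', Finset.mem_univ _, hbi⟩)
      · intro habs
        exact absurd (Finset.mem_univ _) habs
    have hW : MeromNonzero U (μ i₀) := by
      set Δ : (Fin n → ℂ) → ℂ := fun z => (Matrix.of fun a b => h (σ b) z (φ a)).det with hΔdef
      have hΔa : AnalyticOnNhd ℂ Δ U := aux_det_analytic _
        (fun a c => aux_eval_analytic (hh _) (φ a))
      refine ⟨U ∩ Δ ⁻¹' {0}ᶜ, ?_, ⟨y₀, hy₀, hΔ⟩, Set.inter_subset_left, ?_⟩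
      · exact hΔa.continuousOn.isOpen_inter_preimage hUo isOpen_compl_singleton
      · intro z hz
        rw [hμi₀]
        exact hz.2
    exact ⟨μ, hmero, ⟨i₀, hW⟩, U, ⟨subset_rfl, subset_closure⟩, hrelU⟩
end

section
/- Let f be an analytic vector field on a nonempty open connected set U* ⊆ ℂⁿ, and let h₁,…,h_r ∈ 𝒞_{U*}(f) be elements of the centralizer of f that are linearly independent over ℂ but linearly dependent over the field 𝕃 of meromorphic functions on U*. Then the differential equation ẋ = f(x) admits a nonconstant meromorphic first integral on U*. In particular, f admits a nonconstant meromorphic first integral whenever dim_ℂ 𝒞_{U*}(f) > n. -/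
open Finset

/-- `f` admits a nonconstant meromorphic first integral on `U`: a meromorphic
function `φ` that is analytic and nonconstant on a dense open subset `D ⊆ U`,
with `Dφ(z)f(z) = 0` on `D`. -/
def NonconstMeromFirstIntegral {n : ℕ} (U : Set (Fin n → ℂ))
    (f : VFa n) : Prop :=
  ∃ φ : (Fin n → ℂ) → ℂ, MeromOnC U φ ∧
    ∃ D : Set (Fin n → ℂ), IsOpen D ∧ DenseIn U D ∧
      AnalyticOnNhd ℂ φ D ∧
      (∀ z ∈ D, fderiv ℂ φ z (f z) = 0) ∧
      ∃ z ∈ D, ∃ w ∈ D, φ z ≠ φ w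

private lemma cons_inj {N k : ℕ} {j : Fin N} {σ : Fin k → Fin N}
    (hj : j ∉ Set.range σ) (hσ : Function.Injective σ) :
    Function.Injective (Fin.cons j σ : Fin (k+1) → Fin N) := by
  intro a b hab
  rcases Fin.eq_zero_or_eq_succ a with rfl | ⟨a', rfl⟩ <;>
    rcases Fin.eq_zero_or_eq_succ b with rfl | ⟨b', rfl⟩
  · rfl
  · simp only [Fin.cons_zero, Fin.cons_succ] at hab
    exact absurd ⟨b', hab.symm⟩ hj
  · simp only [Fin.cons_zero, Fin.cons_succ] at hab
    exact absurd ⟨a', hab⟩ hj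
  · simp only [Fin.cons_succ] at hab
    exact congrArg Fin.succ (hσ hab)

private lemma det_cons_expand {k : ℕ} (r0 : Fin (k+1) → ℂ) (rest : Fin k → Fin (k+1) → ℂ) :
    (Matrix.of (Fin.cons r0 rest) : Matrix (Fin (k+1)) (Fin (k+1)) ℂ).det
      = ∑ i : Fin (k+1), (-1)^(i:ℕ) * r0 i *
          (Matrix.of (fun l i' => rest l (i.succAbove i')) : Matrix (Fin k) (Fin k) ℂ).det := by
  rw [Matrix.det_succ_row_zero]
  refine Finset.sum_congr rfl fun i _ => ?_
  have h1 : (Matrix.of (Fin.cons r0 rest) : Matrix (Fin (k+1)) (Fin (k+1)) ℂ) 0 i = r0 i := by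
    simp
  have h2 : ((Matrix.of (Fin.cons r0 rest) : Matrix (Fin (k+1)) (Fin (k+1)) ℂ).submatrix
      Fin.succ i.succAbove) = Matrix.of (fun l i' => rest l (i.succAbove i')) := by
    ext l i'
    simp [Matrix.submatrix_apply, Fin.cons_succ]
  rw [h1, h2]

private lemma sum_cdet {r k : ℕ} (σ' : Fin (k+1) → Fin r) (rest : Fin k → Fin (k+1) → ℂ)
    (w : Fin r → ℂ) :
    ∑ m : Fin r,
      (Matrix.of (Fin.cons (fun i => if σ' i = m then (1:ℂ) else 0) rest)
        : Matrix (Fin (k+1)) (Fin (k+1)) ℂ).det * w m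
      = (Matrix.of (Fin.cons (fun i => w (σ' i)) rest)
        : Matrix (Fin (k+1)) (Fin (k+1)) ℂ).det := by
  simp only [det_cons_expand]
  simp only [Finset.sum_mul]
  rw [Finset.sum_comm]
  refine Finset.sum_congr rfl fun i _ => ?_
  have hcoll : ∀ x : Fin r,
      (((-1):ℂ)^(i:ℕ) * if σ' i = x then 1 else 0)
        * (Matrix.of (fun l i' => rest l (i.succAbove i')) : Matrix (Fin k) (Fin k) ℂ).det * w x
      = if σ' i = x then ((-1):ℂ)^(i:ℕ) * w x
          * (Matrix.of (fun l i' => rest l (i.succAbove i')) : Matrix (Fin k) (Fin k) ℂ).det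
        else 0 := by
    intro x; split_ifs <;> ring
  rw [Finset.sum_congr rfl fun x _ => hcoll x, Finset.sum_ite_eq]
  simp

private lemma analyticOnNhd_det {n k : ℕ} {U : Set (Fin n → ℂ)}
    {g : (Fin n → ℂ) → Matrix (Fin k) (Fin k) ℂ}
    (hg : ∀ l i, AnalyticOnNhd ℂ (fun z => g z l i) U) :
    AnalyticOnNhd ℂ (fun z => (g z).det) U := by
  simp only [Matrix.det_apply']
  exact Finset.analyticOnNhd_fun_sum _ fun σ _ =>
    analyticOnNhd_const.mul (Finset.analyticOnNhd_fun_prod _ fun i _ => hg (σ i) i)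

private lemma core {n r : ℕ} {U : Set (Fin n → ℂ)} (hUo : IsOpen U) (hUc : IsConnected U)
    (f : VFa n) (h : Fin r → VFa n)
    (hh : ∀ i, AnalyticOnNhd ℂ (h i) U)
    (hbr : ∀ i, ∀ x ∈ U, abr (h i) f x = 0)
    (hind : ∀ c : Fin r → ℂ, (∀ x ∈ U, (∑ i, c i • h i x) = 0) → c = 0)
    (hnr : ∀ (ρ : Fin r → Fin n) (σ : Fin r → Fin r), Function.Injective ρ →
      Function.Injective σ → ∀ z ∈ U,
        (Matrix.of (fun l i => h (σ i) z (ρ l)) : Matrix (Fin r) (Fin r) ℂ).det = 0) :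
    NonconstMeromFirstIntegral U f := by
  obtain ⟨⟨z₁, hz₁⟩, hUpc⟩ := hUc
  -- the set of sizes of nonvanishing minors
  set K : Set ℕ := {s | ∃ z ∈ U, ∃ ρ : Fin s → Fin n, ∃ σ : Fin s → Fin r,
    Function.Injective ρ ∧ Function.Injective σ ∧
    (Matrix.of (fun l i => h (σ i) z (ρ l)) : Matrix (Fin s) (Fin s) ℂ).det ≠ 0} with hK
  have hK0 : 0 ∈ K := by
    refine ⟨z₁, hz₁, Fin.elim0, Fin.elim0, fun a => a.elim0, fun a => a.elim0, ?_⟩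
    rw [Matrix.det_fin_zero]; exact one_ne_zero
  have hKbdd : BddAbove K := by
    refine ⟨n, fun s hs => ?_⟩
    obtain ⟨z, hz, ρ, σ, hρ, hσ, hdet⟩ := hs
    simpa using Fintype.card_le_of_injective ρ hρ
  set k := sSup K with hkdef
  have hkK : k ∈ K := Nat.sSup_mem ⟨0, hK0⟩ hKbdd
  have hkmax : ∀ s ∈ K, s ≤ k := fun s hs => le_csSup hKbdd hs
  obtain ⟨z₀, hz₀U, ρ, σ, hρ, hσ, hδ₀⟩ := hkK
  have hkler : k ≤ r := by simpa using Fintype.card_le_of_injective σ hσ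
  have hkr : k < r := by
    rcases lt_or_eq_of_le hkler with hlt | he
    · exact hlt
    · exfalso
      have h0 := hnr (fun i => ρ (Fin.cast he.symm i)) (fun i => σ (Fin.cast he.symm i))
        (hρ.comp (Fin.cast_injective he.symm)) (hσ.comp (Fin.cast_injective he.symm)) z₀ hz₀U
      apply hδ₀
      rw [← Matrix.det_submatrix_equiv_self (finCongr he.symm)]
      exact h0
  -- maximality: all (k+1)-minors vanish on U
  have hmax : ∀ (ρ' : Fin (k+1) → Fin n) (σ'' : Fin (k+1) → Fin r), Function.Injective ρ' →
      Function.Injective σ'' → ∀ z ∈ U,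
      (Matrix.of (fun l i => h (σ'' i) z (ρ' l)) : Matrix (Fin (k+1)) (Fin (k+1)) ℂ).det = 0 := by
    intro ρ' σ'' hρ' hσ'' z hz
    by_contra hne
    exact (Nat.not_succ_le_self k) (hkmax _ ⟨z, hz, ρ', σ'', hρ', hσ'', hne⟩)
  -- a column index not hit by σ
  obtain ⟨j, hj⟩ : ∃ j : Fin r, j ∉ Set.range σ := by
    by_contra hcon
    push_neg at hcon
    have hsurj : Function.Surjective σ := fun b => hcon b
    have := Fintype.card_le_of_surjective σ hsurj
    simp only [Fintype.card_fin] at this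
    omega
  set σ' : Fin (k+1) → Fin r := Fin.cons j σ with hσ'def
  have hσ'inj : Function.Injective σ' := cons_inj hj hσ
  -- the coefficient functions
  set rst : (Fin n → ℂ) → Fin k → Fin (k+1) → ℂ := fun z l i => h (σ' i) z (ρ l) with hrst
  set c : Fin r → (Fin n → ℂ) → ℂ := fun m z =>
    (Matrix.of (Fin.cons (fun i => if σ' i = m then (1:ℂ) else 0) (rst z))
      : Matrix (Fin (k+1)) (Fin (k+1)) ℂ).det with hcdef
  -- c m vanishes identically if m is not in the range of σ'
  have hrstz : ∀ z l i, rst z l i = h (σ' i) z (ρ l) := fun z l i => rfl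
  have hcz : ∀ m z, c m z = (Matrix.of (Fin.cons (fun i => if σ' i = m then (1:ℂ) else 0)
      (rst z)) : Matrix (Fin (k+1)) (Fin (k+1)) ℂ).det := fun m z => rfl
  have hσ'0 : σ' 0 = j := by rw [hσ'def]; exact Fin.cons_zero _ _
  have hσ's : ∀ l : Fin k, σ' l.succ = σ l := by
    intro l; rw [hσ'def]; exact Fin.cons_succ _ _ _
  have hczero : ∀ m, (∀ i, σ' i ≠ m) → ∀ z, c m z = 0 := by
    intro m hm z
    rw [hcz]
    apply Matrix.det_eq_zero_of_row_eq_zero 0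
    intro i
    simp [if_neg (hm i)]
  -- c j equals the distinguished k-minor δ
  set δ : (Fin n → ℂ) → ℂ := fun z =>
    (Matrix.of (fun l i => h (σ i) z (ρ l)) : Matrix (Fin k) (Fin k) ℂ).det with hδdef
  have hδz : ∀ z, δ z = (Matrix.of (fun l i => h (σ i) z (ρ l))
      : Matrix (Fin k) (Fin k) ℂ).det := fun z => rfl
  have hcj : ∀ z, c j z = δ z := by
    intro z
    calc c j z
        = ∑ i : Fin (k+1), (-1)^(i:ℕ) * (if σ' i = j then (1:ℂ) else 0) *
          (Matrix.of (fun l i' => rst z l (i.succAbove i')) : Matrix (Fin k) (Fin k) ℂ).det := by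
          rw [hcz]; exact det_cons_expand _ _
      _ = (-1:ℂ)^(((0:Fin (k+1))):ℕ) * (if σ' 0 = j then (1:ℂ) else 0) *
          (Matrix.of (fun l i' => rst z l ((0:Fin (k+1)).succAbove i'))
            : Matrix (Fin k) (Fin k) ℂ).det := by
          apply Finset.sum_eq_single
          · intro i _ hi
            have hne : σ' i ≠ j := fun hc => hi (hσ'inj (hc.trans hσ'0.symm))
            rw [if_neg hne]; ring
          · intro habs; exact absurd (Finset.mem_univ _) habs
      _ = δ z := by
          rw [if_pos hσ'0, hδz]
          simp only [Fin.val_zero, pow_zero, one_mul, mul_one]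
          congr 1
  have hδz₀ : δ z₀ ≠ 0 := hδ₀
  -- analyticity of entries and of the c m
  have hEntry : ∀ (i : Fin r) (p : Fin n), AnalyticOnNhd ℂ (fun z => h i z p) U := by
    intro i p z hz
    exact ((ContinuousLinearMap.proj p : ((Fin n) → ℂ) →L[ℂ] ℂ).analyticAt (h i z)).comp
      (hh i z hz)
  have hcan : ∀ m, AnalyticOnNhd ℂ (c m) U := by
    intro m
    apply analyticOnNhd_det
    intro l i
    rcases Fin.eq_zero_or_eq_succ l with rfl | ⟨l', rfl⟩
    · simpa using (analyticOnNhd_const :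
        AnalyticOnNhd ℂ (fun _ => if σ' i = m then (1:ℂ) else 0) U)
    · simpa [Fin.cons_succ] using hEntry (σ' i) (ρ l')
  have hδan : AnalyticOnNhd ℂ δ U := by
    apply analyticOnNhd_det
    intro l i
    exact hEntry (σ i) (ρ l)
  -- the fundamental relation ∑ c m • h m = 0 on U
  have R1 : ∀ z ∈ U, ∑ m, c m z • h m z = 0 := by
    intro z hz
    funext p
    simp only [Finset.sum_apply, Pi.smul_apply, smul_eq_mul, Pi.zero_apply]
    have := sum_cdet σ' (rst z) (fun m => h m z p)
    rw [show (∑ m, c m z * h m z p) = ∑ m : Fin r,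
        (Matrix.of (Fin.cons (fun i => if σ' i = m then (1:ℂ) else 0) (rst z))
          : Matrix (Fin (k+1)) (Fin (k+1)) ℂ).det * h m z p from rfl, this]
    by_cases hp : ∃ l₀, ρ l₀ = p
    · obtain ⟨l₀, rfl⟩ := hp
      apply Matrix.det_zero_of_row_eq (i := 0) (j := l₀.succ) (Fin.succ_ne_zero l₀).symm
      funext i
      simp [hrst, Fin.cons_succ]
    · push_neg at hp
      have hρ' : Function.Injective (Fin.cons p ρ : Fin (k+1) → Fin n) :=
        cons_inj (by rintro ⟨l₀, hl₀⟩; exact hp l₀ hl₀) hρ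
      have heq : (Matrix.of (Fin.cons (fun i => h (σ' i) z p) (rst z))
          : Matrix (Fin (k+1)) (Fin (k+1)) ℂ)
          = Matrix.of (fun l i => h (σ' i) z ((Fin.cons p ρ : Fin (k+1) → Fin n) l)) := by
        ext l i
        rcases Fin.eq_zero_or_eq_succ l with rfl | ⟨l', rfl⟩
        · simp
        · simp [hrst, Fin.cons_succ]
      rw [heq]
      exact hmax _ _ hρ' hσ'inj z hz
  -- the derived coefficients
  set c' : Fin r → (Fin n → ℂ) → ℂ := fun m z => fderiv ℂ (c m) z (f z) with hc'def
  -- the derived relation ∑ c' m • h m = 0 on U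
  have R2 : ∀ z ∈ U, ∑ m, c' m z • h m z = 0 := by
    intro z hz
    funext p
    simp only [Finset.sum_apply, Pi.smul_apply, smul_eq_mul, Pi.zero_apply]
    -- the function F ≡ 0 on U
    set F : (Fin n → ℂ) → ℂ := fun w => ∑ m, c m w * h m w p with hFdef
    have hF0 : Set.EqOn F (fun _ => (0:ℂ)) U := by
      intro w hw
      have := congrFun (R1 w hw) p
      simpa [F, Finset.sum_apply, Pi.smul_apply, smul_eq_mul] using this
    -- derivative of each h m's p-th coordinate
    have hDm : ∀ m, HasFDerivAt (fun w => h m w p)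
        ((ContinuousLinearMap.proj p : ((Fin n) → ℂ) →L[ℂ] ℂ).comp (fderiv ℂ (h m) z)) z := by
      intro m
      exact ((ContinuousLinearMap.proj p : ((Fin n) → ℂ) →L[ℂ] ℂ).hasFDerivAt).comp z
        ((hh m z hz).differentiableAt.hasFDerivAt)
    have hCm : ∀ m, HasFDerivAt (c m) (fderiv ℂ (c m) z) z := fun m =>
      ((hcan m) z hz).differentiableAt.hasFDerivAt
    have hFd : HasFDerivAt F (∑ m, ((c m z) •
        ((ContinuousLinearMap.proj p : ((Fin n) → ℂ) →L[ℂ] ℂ).comp (fderiv ℂ (h m) z))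
        + (h m z p) • fderiv ℂ (c m) z)) z := by
      exact HasFDerivAt.fun_sum fun m _ => (hCm m).fun_mul (hDm m)
    have hFzero : fderiv ℂ F z = 0 := by
      have hev : F =ᶠ[nhds z] (fun _ => (0:ℂ)) :=
        Filter.eventuallyEq_of_mem (hUo.mem_nhds hz) hF0
      rw [hev.fderiv_eq]
      exact fderiv_const_apply 0
    have hsum0 : (∑ m, ((c m z) •
        ((ContinuousLinearMap.proj p : ((Fin n) → ℂ) →L[ℂ] ℂ).comp (fderiv ℂ (h m) z))
        + (h m z p) • fderiv ℂ (c m) z)) = 0 := by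
      rw [← hFd.fderiv]; exact hFzero
    have happ := congrArg (fun (L : ((Fin n) → ℂ) →L[ℂ] ℂ) => L (f z)) hsum0
    simp only [ContinuousLinearMap.sum_apply, ContinuousLinearMap.add_apply,
      ContinuousLinearMap.smul_apply, ContinuousLinearMap.comp_apply,
      ContinuousLinearMap.proj_apply, ContinuousLinearMap.zero_apply, smul_eq_mul] at happ
    -- use the brackets : fderiv (h m) z (f z) = fderiv f z (h m z)
    have hbrk : ∀ m, fderiv ℂ (h m) z (f z) = fderiv ℂ f z (h m z) := by
      intro m
      have := hbr m z hz
      rw [abr] at this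
      exact (sub_eq_zero.mp this).symm
    -- first part of the sum vanishes
    have hfirst : ∑ m, c m z * (fderiv ℂ f z (h m z) p) = 0 := by
      have h1 : fderiv ℂ f z (∑ m, c m z • h m z) = 0 := by rw [R1 z hz]; simp
      have h2 : fderiv ℂ f z (∑ m, c m z • h m z)
          = ∑ m, c m z • fderiv ℂ f z (h m z) := by
        rw [map_sum]
        exact Finset.sum_congr rfl fun m _ => by rw [(fderiv ℂ f z).map_smul]
      have := congrFun (h2 ▸ h1) p
      simpa [Finset.sum_apply, Pi.smul_apply, smul_eq_mul] using this
    have : ∑ m, (c m z * (fderiv ℂ (h m) z (f z) p) + h m z p * fderiv ℂ (c m) z (f z)) = 0 :=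
      happ
    rw [Finset.sum_add_distrib] at this
    have hre : ∑ m, c m z * (fderiv ℂ (h m) z (f z) p)
        = ∑ m, c m z * (fderiv ℂ f z (h m z) p) :=
      Finset.sum_congr rfl fun m _ => by rw [hbrk m]
    rw [hre, hfirst, zero_add] at this
    calc ∑ m, c' m z * h m z p = ∑ m, h m z p * fderiv ℂ (c m) z (f z) :=
          Finset.sum_congr rfl fun m _ => by rw [hc'def]; ring
      _ = 0 := this
  -- the dense open set where δ ≠ 0
  set D : Set (Fin n → ℂ) := {z | z ∈ U ∧ δ z ≠ 0} with hDdef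
  have hDU : D ⊆ U := fun z hz => hz.1
  have hz₀D : z₀ ∈ D := ⟨hz₀U, hδz₀⟩
  have hDo : IsOpen D := by
    rw [isOpen_iff_mem_nhds]
    rintro z ⟨hzU, hzne⟩
    have h1 : ∀ᶠ w in nhds z, δ w ≠ 0 := ((hδan z hzU).continuousAt).eventually_ne hzne
    have h2 : ∀ᶠ w in nhds z, w ∈ U := hUo.mem_nhds hzU
    exact (h2.and h1 : ∀ᶠ w in nhds z, w ∈ U ∧ δ w ≠ 0)
  have hDd : U ⊆ closure D := by
    intro y hy
    by_contra hyc
    have hN : U ∩ (closure D)ᶜ ∈ nhds y :=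
      Filter.inter_mem (hUo.mem_nhds hy) (isClosed_closure.isOpen_compl.mem_nhds hyc)
    have hev : δ =ᶠ[nhds y] (fun _ => (0:ℂ)) := by
      refine Filter.eventuallyEq_of_mem hN (fun w hw => ?_)
      by_contra hwne
      exact hw.2 (subset_closure ⟨hw.1, hwne⟩)
    have := hδan.eqOn_zero_of_preconnected_of_eventuallyEq_zero hUpc hy hev
    exact hδz₀ (this hz₀U)
  -- pointwise proportionality of c' and c on D
  have hprop : ∀ z ∈ D, ∀ m,
      fderiv ℂ (c m) z (f z) * δ z - c m z * fderiv ℂ (c j) z (f z) = 0 := by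
    rintro z ⟨hzU, hzne⟩ m
    set d : Fin r → ℂ := fun m' => c' m' z * δ z - c m' z * c' j z with hddef
    have hdj : d j = 0 := by simp only [hddef]; rw [hcj]; ring
    have hdout : ∀ m', (∀ i, σ' i ≠ m') → d m' = 0 := by
      intro m' hin
      have hc0 : c m' = fun _ => (0:ℂ) := funext (hczero m' hin)
      have hc'0 : c' m' z = 0 := by
        simp only [hc'def]
        rw [hc0]
        simp
      simp only [hddef]
      rw [hc'0, hczero m' hin z]
      ring
    have hdrel : ∑ m', d m' • h m' z = 0 := by
      have e : ∑ m', d m' • h m' z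
          = δ z • (∑ m', c' m' z • h m' z) - c' j z • (∑ m', c m' z • h m' z) := by
        rw [Finset.smul_sum, Finset.smul_sum, ← Finset.sum_sub_distrib]
        refine Finset.sum_congr rfl fun m' _ => ?_
        simp only [hddef]
        rw [sub_smul, smul_smul, smul_smul, mul_comm (δ z), mul_comm (c' j z)]
      rw [e, R1 z hzU, R2 z hzU, smul_zero, smul_zero, sub_zero]
    have hsum_red : ∀ q : Fin n, ∑ l : Fin k, d (σ l) * h (σ l) z q = 0 := by
      intro q
      have h0 : ∑ m', d m' * h m' z q = 0 := by
        have := congrFun hdrel q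
        simpa [Finset.sum_apply, Pi.smul_apply, smul_eq_mul] using this
      have hzero : ∀ m' ∈ Finset.univ, m' ∉ Finset.image σ Finset.univ →
          d m' * h m' z q = 0 := by
        intro m' _ hm'
        by_cases hin : ∃ i, σ' i = m'
        · obtain ⟨i, rfl⟩ := hin
          rcases Fin.eq_zero_or_eq_succ i with rfl | ⟨l, rfl⟩
          · rw [hσ'0, hdj, zero_mul]
          · exact absurd (Finset.mem_image.mpr ⟨l, Finset.mem_univ l, (hσ's l).symm⟩) hm'
        · push_neg at hin
          rw [hdout _ hin, zero_mul]
      calc ∑ l : Fin k, d (σ l) * h (σ l) z q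
          = ∑ m' ∈ Finset.image σ Finset.univ, d m' * h m' z q :=
            (Finset.sum_image (f := fun m' => d m' * h m' z q) (g := σ)
              (fun a _ b _ hab => hσ hab)).symm
        _ = ∑ m', d m' * h m' z q := Finset.sum_subset (Finset.subset_univ _) hzero
        _ = 0 := h0
    set N : Matrix (Fin k) (Fin k) ℂ := Matrix.of (fun l i => h (σ i) z (ρ l)) with hNdef
    have hNdet : N.det ≠ 0 := by
      intro hcontra
      exact hzne (by rw [hδz]; exact hcontra)
    have hNv : N.mulVec (fun l => d (σ l)) = 0 := by
      funext l
      have e2 : ∑ i, h (σ i) z (ρ l) * d (σ i) = 0 := by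
        rw [Finset.sum_congr rfl fun i _ => mul_comm (h (σ i) z (ρ l)) (d (σ i))]
        exact hsum_red (ρ l)
      simpa [Matrix.mulVec, dotProduct, hNdef] using e2
    have hveq : (fun l => d (σ l)) = 0 := by
      have hu : IsUnit N.det := isUnit_iff_ne_zero.mpr hNdet
      calc (fun l => d (σ l))
          = (1 : Matrix (Fin k) (Fin k) ℂ).mulVec (fun l => d (σ l)) :=
            (Matrix.one_mulVec _).symm
        _ = (N⁻¹ * N).mulVec (fun l => d (σ l)) := by rw [Matrix.nonsing_inv_mul N hu]
        _ = N⁻¹.mulVec (N.mulVec (fun l => d (σ l))) := (Matrix.mulVec_mulVec _ _ _).symm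
        _ = 0 := by rw [hNv, Matrix.mulVec_zero]
    have hdm : d m = 0 := by
      by_cases hin : ∃ i, σ' i = m
      · obtain ⟨i, rfl⟩ := hin
        rcases Fin.eq_zero_or_eq_succ i with rfl | ⟨l, rfl⟩
        · rw [hσ'0]; exact hdj
        · rw [hσ's l]
          have := congrFun hveq l
          simpa using this
      · push_neg at hin
        exact hdout _ hin
    simpa only [hddef, hc'def] using hdm
  -- some ratio is nonconstant on D
  have hnc : ∃ m, ∃ zz ∈ D, ∃ ww ∈ D, c m zz / δ zz ≠ c m ww / δ ww := by
    by_contra hcon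
    push_neg at hcon
    set κ : Fin r → ℂ := fun m => c m z₀ / δ z₀ with hκdef
    have hg : ∀ x ∈ U, (∑ m, κ m • h m x) = 0 := by
      have hgD : ∀ x ∈ D, (∑ m, κ m • h m x) = 0 := by
        rintro x ⟨hxU, hxne⟩
        have hκx : ∀ m, κ m = c m x / δ x := fun m => hcon m z₀ hz₀D x ⟨hxU, hxne⟩
        calc ∑ m, κ m • h m x = ∑ m, (δ x)⁻¹ • (c m x • h m x) := by
              refine Finset.sum_congr rfl fun m _ => ?_
              rw [hκx m, smul_smul, div_eq_inv_mul]
          _ = (δ x)⁻¹ • ∑ m, c m x • h m x := (Finset.smul_sum).symm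
          _ = 0 := by rw [R1 x hxU, smul_zero]
      have hana : AnalyticOnNhd ℂ (fun x => ∑ m, κ m • h m x) U :=
        Finset.analyticOnNhd_fun_sum _ fun m _ => fun x hx => analyticAt_const.fun_smul (hh m x hx)
      have hev : (fun x => ∑ m, κ m • h m x) =ᶠ[nhds z₀] (fun _ => 0) :=
        Filter.eventuallyEq_of_mem (hDo.mem_nhds hz₀D) hgD
      exact fun x hx =>
        hana.eqOn_zero_of_preconnected_of_eventuallyEq_zero hUpc hz₀U hev hx
    have hκ0 : κ = 0 := hind κ hg
    have hκj : κ j = 1 := by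
      simp only [hκdef]
      rw [hcj]
      exact div_self hδz₀
    rw [hκ0] at hκj
    exact one_ne_zero hκj.symm
  obtain ⟨m₀, zz, hzz, ww, hww, hnec⟩ := hnc
  refine ⟨fun z => c m₀ z / δ z, ?_, D, hDo, ⟨hDU, hDd⟩, ?_, ?_, zz, hzz, ww, hww, hnec⟩
  · -- meromorphic on U
    intro y hy
    exact ⟨U, hUo, hy, subset_rfl, c m₀, δ, hcan m₀, hδan, ⟨z₀, hz₀U, hδz₀⟩,
      fun z _ _ => rfl⟩
  · -- analytic on D
    intro z hzD
    exact ((hcan m₀) z (hDU hzD)).div (hδan z (hDU hzD)) hzD.2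
  · -- first integral property
    rintro z ⟨hzU, hzne⟩
    have hci : HasFDerivAt (c m₀) (fderiv ℂ (c m₀) z) z :=
      ((hcan m₀) z hzU).differentiableAt.hasFDerivAt
    have hcjd : HasFDerivAt δ (fderiv ℂ δ z) z :=
      (hδan z hzU).differentiableAt.hasFDerivAt
    have hinv : HasFDerivAt (fun y => (δ y)⁻¹)
        ((ContinuousLinearMap.smulRight (1 : ℂ →L[ℂ] ℂ) (-(δ z ^ 2)⁻¹)).comp
          (fderiv ℂ δ z)) z :=
      (hasFDerivAt_inv hzne).comp z hcjd
    have hmul := hci.fun_mul hinv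
    have hphieq : (fun y => c m₀ y / δ y) = fun y => c m₀ y * (δ y)⁻¹ := by
      funext y; rw [div_eq_mul_inv]
    rw [hphieq, hmul.fderiv]
    simp only [ContinuousLinearMap.add_apply, ContinuousLinearMap.smul_apply,
      ContinuousLinearMap.comp_apply, ContinuousLinearMap.smulRight_apply,
      ContinuousLinearMap.one_apply, smul_eq_mul]
    have hfd : fderiv ℂ (c j) z = fderiv ℂ δ z := by rw [funext hcj]
    have hd' : fderiv ℂ (c m₀) z (f z) * δ z - c m₀ z * (fderiv ℂ δ z (f z)) = 0 := by
      have := hprop z ⟨hzU, hzne⟩ m₀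
      rwa [hfd] at this
    have e3 : c m₀ z * ((fderiv ℂ δ z) (f z) * -(δ z ^ 2)⁻¹)
        + (δ z)⁻¹ * (fderiv ℂ (c m₀) z) (f z)
        = (δ z ^ 2)⁻¹ * ((fderiv ℂ (c m₀) z) (f z) * δ z
            - c m₀ z * (fderiv ℂ δ z) (f z)) := by
      field_simp
      ring
    rw [e3, hd', mul_zero]


/-- If `h₁,…,h_r` are centralizer elements of `f` on the
nonempty open connected set `U`, linearly independent over ℂ but linearly
dependent over the field of meromorphic functions, then `f` admits a nonconstant
meromorphic first integral on `U`. In particular this holds whenever the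
centralizer contains `n+1` elements that are linearly independent over ℂ. -/
theorem stmt_1 {n : ℕ} (U : Set (Fin n → ℂ)) (hUo : IsOpen U)
    (hUc : IsConnected U)
    (f : VFa n) (hf : AnalyticOnNhd ℂ f U) :
    (∀ (r : ℕ) (h : Fin r → VFa n),
      (∀ i, AnalyticOnNhd ℂ (h i) U) →
      (∀ i, ∀ x ∈ U, abr (h i) f x = 0) →
      (∀ c : Fin r → ℂ, (∀ x ∈ U, (∑ i, c i • h i x) = 0) → c = 0) →
      LinDepMerom U h →
      NonconstMeromFirstIntegral U f) ∧
    (∀ h : Fin (n + 1) → VFa n,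
      (∀ i, AnalyticOnNhd ℂ (h i) U) →
      (∀ i, ∀ x ∈ U, abr (h i) f x = 0) →
      (∀ c : Fin (n + 1) → ℂ, (∀ x ∈ U, (∑ i, c i • h i x) = 0) → c = 0) →
      NonconstMeromFirstIntegral U f) := by
  constructor
  · -- part 1
    intro r h hh hbr hind hdep
    obtain ⟨μ, hμm, ⟨istar, W, hWo, hWne, hWU, hWnz⟩, D₀, ⟨hD₀U, hD₀d⟩, hrel⟩ := hdep
    apply core hUo hUc f h hh hbr hind
    intro ρ σ hρ hσ
    have hσsurj : Function.Surjective σ := Finite.injective_iff_surjective.mp hσ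
    have hent : ∀ (i : Fin r) (p : Fin n), AnalyticOnNhd ℂ (fun z => h i z p) U :=
      fun i p z hz =>
        ((ContinuousLinearMap.proj p : ((Fin n) → ℂ) →L[ℂ] ℂ).analyticAt (h i z)).comp
          (hh i z hz)
    set G : (Fin n → ℂ) → ℂ := fun z =>
      (Matrix.of (fun l i => h (σ i) z (ρ l)) : Matrix (Fin r) (Fin r) ℂ).det with hGdef
    have hGan : AnalyticOnNhd ℂ G U := analyticOnNhd_det (fun l i => hent (σ i) (ρ l))
    have hG0 : ∀ z ∈ D₀ ∩ W, G z = 0 := by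
      rintro z ⟨hzD, hzW⟩
      by_contra hGz
      set N : Matrix (Fin r) (Fin r) ℂ := Matrix.of (fun l i => h (σ i) z (ρ l)) with hNdef
      have hNv : N.mulVec (fun i => μ (σ i) z) = 0 := by
        funext l
        have h0 := congrFun (hrel z hzD) (ρ l)
        have h1 : ∑ i, μ i z * h i z (ρ l) = 0 := by
          simpa [Finset.sum_apply, Pi.smul_apply, smul_eq_mul] using h0
        have h2 : ∑ i, h (σ i) z (ρ l) * μ (σ i) z = ∑ i, μ i z * h i z (ρ l) := by
          rw [← Equiv.sum_comp (Equiv.ofBijective σ ⟨hσ, hσsurj⟩)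
            (fun i => μ i z * h i z (ρ l))]
          exact Finset.sum_congr rfl fun i _ => mul_comm _ _
        simpa [Matrix.mulVec, dotProduct, hNdef] using h2.trans h1
      have hveq : (fun i => μ (σ i) z) = 0 := by
        have hu : IsUnit N.det := isUnit_iff_ne_zero.mpr hGz
        calc (fun i => μ (σ i) z)
            = (1 : Matrix (Fin r) (Fin r) ℂ).mulVec (fun i => μ (σ i) z) :=
              (Matrix.one_mulVec _).symm
          _ = (N⁻¹ * N).mulVec (fun i => μ (σ i) z) := by rw [Matrix.nonsing_inv_mul N hu]
          _ = N⁻¹.mulVec (N.mulVec (fun i => μ (σ i) z)) := (Matrix.mulVec_mulVec _ _ _).symm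
          _ = 0 := by rw [hNv, Matrix.mulVec_zero]
      obtain ⟨i0, hi0⟩ := hσsurj istar
      have hival := congrFun hveq i0
      rw [hi0] at hival
      exact hWnz z hzW hival
    have hGW : ∀ w ∈ W, G w = 0 := by
      intro w hw
      by_contra hne
      have hev : ∀ᶠ x in nhds w, G x ≠ 0 := ((hGan w (hWU hw)).continuousAt).eventually_ne hne
      have hwc : w ∈ closure D₀ := hD₀d (hWU hw)
      rw [mem_closure_iff_nhds] at hwc
      obtain ⟨x, hxt, hxD⟩ := hwc _ (Filter.inter_mem hev (hWo.mem_nhds hw))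
      exact hxt.1 (hG0 x ⟨hxD, hxt.2⟩)
    obtain ⟨w₀, hw₀⟩ := hWne
    have hev : G =ᶠ[nhds w₀] (fun _ => (0:ℂ)) :=
      Filter.eventuallyEq_of_mem (hWo.mem_nhds hw₀) hGW
    exact hGan.eqOn_zero_of_preconnected_of_eventuallyEq_zero hUc.2 (hWU hw₀) hev
  · -- part 2
    intro h hh hbr hind
    apply core hUo hUc f h hh hbr hind
    intro ρ σ hρ hσ
    have hcard := Fintype.card_le_of_injective ρ hρ
    simp only [Fintype.card_fin] at hcard
    exact absurd hcard (by omega)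
end

section
/- Let A_s = diag(λ₁,…,λ_n) be a semisimple linear map on ℂⁿ. The dimension over ℂ of the formal centralizer 𝒞^for(A_s) (equivalently of the polynomial centralizer) is infinite if and only if there exist nonnegative integers d₁,…,d_n with Σ d_iλ_i = 0 and Σ d_i > 0; equivalently, if and only if the monomial x₁^{d₁}⋯x_n^{d_n} is a first integral of ẋ = A_s x for some such d; equivalently, if and only if ẋ = A_s x admits a nonconstant formal first integral. -/
open Finset

/-- Coefficient-wise partial derivative of a multivariate formal power series. -/
noncomputable def psD {n : ℕ} (i : Fin n) (φ : MvPowerSeries (Fin n) ℂ) :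
    MvPowerSeries (Fin n) ℂ :=
  fun m => ((m i : ℂ) + 1) * MvPowerSeries.coeff (R := ℂ) (m + Finsupp.single i 1) φ

/-- Formal vector fields on ℂⁿ. -/
abbrev FVF (n : ℕ) := Fin n → MvPowerSeries (Fin n) ℂ

/-- Lie derivative `X_g(φ)`. -/
noncomputable def lieD {n : ℕ} (g : FVF n) (φ : MvPowerSeries (Fin n) ℂ) :
    MvPowerSeries (Fin n) ℂ :=
  ∑ j, g j * psD j φ

/-- Lie bracket `[g,h] = Dh·g − Dg·h`. -/
noncomputable def fbr {n : ℕ} (g h : FVF n) : FVF n :=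
  fun i => lieD g (h i) - lieD h (g i)

/-- The linear vector field `x ↦ Ax`. -/
noncomputable def linVF {n : ℕ} (A : Matrix (Fin n) (Fin n) ℂ) : FVF n :=
  fun i => ∑ j, MvPowerSeries.C (σ := Fin n) (R := ℂ) (A i j) * MvPowerSeries.X j

/-- `f` vanishes at `0` and has linear part `A`. -/
def hasLin {n : ℕ} (f : FVF n) (A : Matrix (Fin n) (Fin n) ℂ) : Prop :=
  (∀ i, MvPowerSeries.coeff (R := ℂ) 0 (f i) = 0) ∧
  ∀ i j, MvPowerSeries.coeff (R := ℂ) (Finsupp.single j 1) (f i) = A i j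

/-- Multiplication of a vector field by a scalar formal power series. -/
noncomputable def psSMul {n : ℕ} (φ : MvPowerSeries (Fin n) ℂ) (f : FVF n) : FVF n :=
  fun i => φ * f i

/-- A formal power series is constant. -/
def constPS {n : ℕ} (φ : MvPowerSeries (Fin n) ℂ) : Prop :=
  ∀ m : Fin n →₀ ℕ, m ≠ 0 → MvPowerSeries.coeff (R := ℂ) m φ = 0

/-- A matrix is diagonalizable (semisimple). -/
def IsDiagonalizable {n : ℕ} (M : Matrix (Fin n) (Fin n) ℂ) : Prop :=
  ∃ P : Matrix (Fin n) (Fin n) ℂ, IsUnit P ∧ (P⁻¹ * M * P).IsDiag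

/-- Dimension of the space of matrices commuting with `A`. -/
noncomputable def matCentDim {n : ℕ} (A : Matrix (Fin n) (Fin n) ℂ) : ℕ :=
  Module.finrank ℂ (Subalgebra.centralizer ℂ ({A} : Set (Matrix (Fin n) (Fin n) ℂ)))

/-- Linear part (as a matrix) of a formal vector field. -/
noncomputable def linPart {n : ℕ} (h : FVF n) : Matrix (Fin n) (Fin n) ℂ :=
  Matrix.of fun i j => MvPowerSeries.coeff (R := ℂ) (Finsupp.single j 1) (h i)

namespace St5
open MvPowerSeries

lemma coeff_psD {n : ℕ} (j : Fin n) (φ : MvPowerSeries (Fin n) ℂ) (m : Fin n →₀ ℕ) :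
    coeff (R := ℂ) m (psD j φ) = ((m j : ℂ) + 1) * coeff (R := ℂ) (m + Finsupp.single j 1) φ := rfl

lemma linVF_diag {n : ℕ} (lam : Fin n → ℂ) (i : Fin n) :
    linVF (Matrix.diagonal lam) i = C (σ := Fin n) (R := ℂ) (lam i) * X i := by
  unfold linVF
  rw [Finset.sum_eq_single i]
  · rw [Matrix.diagonal_apply_eq]
  · intro j _ hj
    rw [Matrix.diagonal_apply_ne _ (Ne.symm hj), map_zero, zero_mul]
  · intro h; exact absurd (mem_univ i) h

lemma coeff_X_mul_psD {n : ℕ} (j : Fin n) (φ : MvPowerSeries (Fin n) ℂ) (m : Fin n →₀ ℕ) :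
    coeff (R := ℂ) m (X j * psD j φ) = (m j : ℂ) * coeff (R := ℂ) m φ := by
  rw [X, coeff_monomial_mul]
  split_ifs with h
  · rw [coeff_psD, one_mul, tsub_add_cancel_of_le h, Finsupp.tsub_apply,
      Finsupp.single_eq_same]
    have h1 : 1 ≤ m j := Finsupp.single_le_iff.mp h
    have : ((m j - 1 : ℕ) : ℂ) = (m j : ℂ) - 1 := by push_cast [h1]; ring
    rw [this]; ring
  · have : m j = 0 := by
      by_contra hm
      exact h (Finsupp.single_le_iff.mpr (Nat.one_le_iff_ne_zero.mpr hm))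
    rw [this]; simp

lemma coeff_lieD_lin {n : ℕ} (lam : Fin n → ℂ) (φ : MvPowerSeries (Fin n) ℂ) (m : Fin n →₀ ℕ) :
    coeff (R := ℂ) m (lieD (linVF (Matrix.diagonal lam)) φ)
      = (∑ j, (m j : ℂ) * lam j) * coeff (R := ℂ) m φ := by
  unfold lieD
  rw [map_sum, Finset.sum_mul]
  apply Finset.sum_congr rfl
  intro j _
  rw [linVF_diag, mul_assoc, coeff_C_mul, coeff_X_mul_psD]
  ring

lemma psD_C_mul {n : ℕ} (j : Fin n) (c : ℂ) (φ : MvPowerSeries (Fin n) ℂ) :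
    psD j (C (σ := Fin n) (R := ℂ) c * φ) = C (σ := Fin n) (R := ℂ) c * psD j φ := by
  ext m
  rw [coeff_psD, coeff_C_mul, coeff_C_mul, coeff_psD]
  ring

lemma psD_X {n : ℕ} (i j : Fin n) :
    psD j (X i : MvPowerSeries (Fin n) ℂ) = if j = i then 1 else 0 := by
  classical
  ext m
  rw [coeff_psD, coeff_X]
  split_ifs with h1 h2 h2
  · -- m + single j 1 = single i 1, j = i
    subst h2
    have hm : m = 0 := add_right_cancel (b := Finsupp.single j 1) (c := 0)
      (by rw [zero_add]; exact h1)
    subst hm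
    simp [coeff_one]
  · -- m + single j 1 = single i 1, j ≠ i : impossible
    exfalso
    have := DFunLike.congr_fun h1 j
    simp only [Finsupp.coe_add, Pi.add_apply, Finsupp.single_eq_same,
      Finsupp.single_apply] at this
    rw [if_neg (fun hh => h2 hh.symm)] at this
    omega
  · -- not eq, j = i : coeff m 1
    subst h2
    rw [coeff_one]
    split_ifs with h3
    · subst h3; simp at h1
    · ring
  · simp

lemma lieD_linVF_diag {n : ℕ} (lam : Fin n → ℂ) (h : FVF n) (i : Fin n) :
    lieD h (linVF (Matrix.diagonal lam) i) = C (σ := Fin n) (R := ℂ) (lam i) * h i := by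
  unfold lieD
  rw [Finset.sum_eq_single i]
  · rw [linVF_diag, psD_C_mul, psD_X, if_pos rfl, mul_one, mul_comm]
  · intro j _ hj
    rw [linVF_diag, psD_C_mul, psD_X, if_neg hj, mul_zero, mul_zero]
  · intro hi; exact absurd (mem_univ i) hi

lemma coeff_fbr {n : ℕ} (lam : Fin n → ℂ) (h : FVF n) (i : Fin n) (m : Fin n →₀ ℕ) :
    coeff (R := ℂ) m (fbr (linVF (Matrix.diagonal lam)) h i)
      = ((∑ j, (m j : ℂ) * lam j) - lam i) * coeff (R := ℂ) m (h i) := by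
  unfold fbr
  rw [map_sub, coeff_lieD_lin, lieD_linVF_diag, coeff_C_mul]
  ring

end St5

namespace St5
open MvPowerSeries

lemma cent_iff {n : ℕ} (lam : Fin n → ℂ) (h : FVF n) :
    fbr (linVF (Matrix.diagonal lam)) h = 0 ↔
      ∀ i (m : Fin n →₀ ℕ), (∑ j, (m j : ℂ) * lam j) ≠ lam i → coeff (R := ℂ) m (h i) = 0 := by
  constructor
  · intro h0 i m hne
    have h1 : coeff (R := ℂ) m (fbr (linVF (Matrix.diagonal lam)) h i) = 0 := by
      rw [congrFun h0 i, Pi.zero_apply, map_zero]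
    rw [coeff_fbr] at h1
    rcases mul_eq_zero.mp h1 with h2 | h2
    · exact absurd (sub_eq_zero.mp h2) hne
    · exact h2
  · intro hc
    funext i
    ext m
    rw [coeff_fbr, Pi.zero_apply, map_zero]
    by_cases hw : (∑ j, (m j : ℂ) * lam j) = lam i
    · rw [hw, sub_self, zero_mul]
    · rw [hc i m hw, mul_zero]

lemma wsum_add {n : ℕ} (lam : Fin n → ℂ) (a b : Fin n →₀ ℕ) :
    ∑ j, (((a + b) j : ℕ) : ℂ) * lam j
      = (∑ j, (a j : ℂ) * lam j) + ∑ j, (b j : ℂ) * lam j := by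
  rw [← Finset.sum_add_distrib]
  apply Finset.sum_congr rfl
  intro j _
  simp [Finsupp.add_apply, add_mul]

lemma wsum_smul {n : ℕ} (lam : Fin n → ℂ) (k : ℕ) (d : Fin n →₀ ℕ) :
    ∑ j, (((k • d) j : ℕ) : ℂ) * lam j = (k : ℂ) * ∑ j, (d j : ℂ) * lam j := by
  rw [Finset.mul_sum]
  apply Finset.sum_congr rfl
  intro j _
  simp [Finsupp.smul_apply, Nat.cast_mul, mul_assoc]

lemma wsum_single {n : ℕ} (lam : Fin n → ℂ) (i : Fin n) :
    ∑ j, ((Finsupp.single i 1 : Fin n →₀ ℕ) j : ℂ) * lam j = lam i := by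
  classical
  rw [Finset.sum_eq_single i]
  · simp
  · intro j _ hj
    simp [Finsupp.single_apply, Ne.symm hj]
  · intro hi; exact absurd (mem_univ i) hi

end St5

namespace St5
open MvPowerSeries

lemma part2 {n : ℕ} (lam : Fin n → ℂ) :
    (∃ d : Fin n →₀ ℕ, (∑ i, (d i : ℂ) * lam i = 0) ∧ 0 < ∑ i, d i)
      ↔ (∃ d : Fin n →₀ ℕ, 0 < (∑ i, d i) ∧
          lieD (linVF (Matrix.diagonal lam)) (MvPowerSeries.monomial (R := ℂ) d 1) = 0) := by
  classical
  constructor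
  · rintro ⟨d, hs, hd⟩
    refine ⟨d, hd, ?_⟩
    ext m
    rw [coeff_lieD_lin, map_zero, coeff_monomial]
    split_ifs with h
    · subst h; rw [mul_one, hs]
    · rw [mul_zero]
  · rintro ⟨d, hd, h0⟩
    have h1 := congrArg (coeff (R := ℂ) d) h0
    rw [coeff_lieD_lin, map_zero, coeff_monomial, if_pos rfl, mul_one] at h1
    exact ⟨d, h1, hd⟩

lemma part3 {n : ℕ} (lam : Fin n → ℂ) :
    (∃ d : Fin n →₀ ℕ, (∑ i, (d i : ℂ) * lam i = 0) ∧ 0 < ∑ i, d i)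
      ↔ (∃ φ : MvPowerSeries (Fin n) ℂ,
          lieD (linVF (Matrix.diagonal lam)) φ = 0 ∧ ¬ constPS φ) := by
  classical
  constructor
  · rintro ⟨d, hs, hd⟩
    refine ⟨MvPowerSeries.monomial (R := ℂ) d 1, ?_, ?_⟩
    · ext m
      rw [coeff_lieD_lin, map_zero, coeff_monomial]
      split_ifs with h
      · subst h; rw [mul_one, hs]
      · rw [mul_zero]
    · intro hc
      have hd0 : d ≠ 0 := by
        intro h; subst h; simp at hd
      have := hc d hd0
      rw [coeff_monomial, if_pos rfl] at this
      exact one_ne_zero this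
  · rintro ⟨φ, h0, hnc⟩
    unfold constPS at hnc
    push_neg at hnc
    obtain ⟨m, hm0, hmc⟩ := hnc
    have h1 : coeff (R := ℂ) m (lieD (linVF (Matrix.diagonal lam)) φ) = 0 := by
      rw [h0, map_zero]
    rw [coeff_lieD_lin] at h1
    have hs : ∑ j, (m j : ℂ) * lam j = 0 := by
      rcases mul_eq_zero.mp h1 with h | h
      · exact h
      · exact absurd h hmc
    refine ⟨m, hs, ?_⟩
    obtain ⟨j, hj⟩ : ∃ j, m j ≠ 0 := by
      by_contra hc; push_neg at hc
      exact hm0 (Finsupp.ext hc)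
    calc 0 < m j := Nat.pos_of_ne_zero hj
      _ ≤ ∑ i, m i := Finset.single_le_sum (fun i _ => Nat.zero_le _) (mem_univ j)

lemma part1_rev {n : ℕ} (lam : Fin n → ℂ)
    (hres : ∃ d : Fin n →₀ ℕ, (∑ i, (d i : ℂ) * lam i = 0) ∧ 0 < ∑ i, d i) (N : ℕ) :
    ∃ g : Fin N → FVF n,
      (∀ i, fbr (linVF (Matrix.diagonal lam)) (g i) = 0) ∧ LinearIndependent ℂ g := by
  classical
  obtain ⟨d, hs, hd⟩ := hres
  obtain ⟨i₀, hi₀⟩ : ∃ i, d i ≠ 0 := by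
    by_contra hc; push_neg at hc
    rw [Finset.sum_eq_zero (fun i _ => hc i)] at hd
    exact lt_irrefl 0 hd
  have hw : ∀ (k : ℕ) (i : Fin n),
      ∑ j, (((k • d + Finsupp.single i 1 : Fin n →₀ ℕ) j : ℕ) : ℂ) * lam j = lam i := by
    intro k i
    rw [wsum_add, wsum_smul, wsum_single, hs, mul_zero, zero_add]
  refine ⟨fun k i => MvPowerSeries.monomial (R := ℂ) ((k : ℕ) • d + Finsupp.single i 1) 1, ?_, ?_⟩
  · intro k
    rw [cent_iff]
    intro i m hne
    rw [coeff_monomial]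
    split_ifs with h
    · exact absurd (h ▸ hw k i) hne
    · rfl
  · rw [Fintype.linearIndependent_iff]
    intro c hc k
    have hinj : ∀ k' : Fin N,
        ((k' : ℕ) • d + Finsupp.single i₀ 1 = (k : ℕ) • d + Finsupp.single i₀ 1) → k' = k := by
      intro k' heq
      have := DFunLike.congr_fun heq i₀
      simp only [Finsupp.coe_add, Pi.add_apply, Finsupp.smul_apply, smul_eq_mul,
        Finsupp.single_eq_same] at this
      have hkk : (k' : ℕ) = k := Nat.eq_of_mul_eq_mul_right (Nat.pos_of_ne_zero hi₀) (by omega)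
      exact Fin.ext hkk
    have h1 := congrFun hc i₀
    rw [Finset.sum_apply] at h1
    have h2 := congrArg (coeff (R := ℂ) ((k : ℕ) • d + Finsupp.single i₀ 1)) h1
    rw [map_sum] at h2
    simp only [Pi.smul_apply, MvPowerSeries.coeff_smul, coeff_monomial, Pi.zero_apply,
      map_zero] at h2
    rw [Finset.sum_eq_single k] at h2
    · rw [if_pos rfl, mul_one] at h2
      exact h2
    · intro k' _ hk'
      rw [if_neg (fun h => hk' (hinj k' h.symm)), mul_zero]
    · intro hk; exact absurd (mem_univ k) hk

end St5

namespace St5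
open MvPowerSeries

lemma part1_fwd {n : ℕ} (lam : Fin n → ℂ)
    (H : ∀ N : ℕ, ∃ g : Fin N → FVF n,
        (∀ i, fbr (linVF (Matrix.diagonal lam)) (g i) = 0) ∧ LinearIndependent ℂ g) :
    ∃ d : Fin n →₀ ℕ, (∑ i, (d i : ℂ) * lam i = 0) ∧ 0 < ∑ i, d i := by
  classical
  by_contra hres
  -- each resonance slice is finite
  have hfin : ∀ i : Fin n, {m : Fin n →₀ ℕ | (∑ j, (m j : ℂ) * lam j) = lam i}.Finite := by
    intro i
    by_contra hinf
    rw [← Set.not_infinite, not_not] at hinf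
    obtain ⟨a, b, hab, hle⟩ := (wellQuasiOrdered_le (α := Fin n →₀ ℕ))
      (fun k => (hinf.natEmbedding _ k : Fin n →₀ ℕ))
    set fa := (hinf.natEmbedding _ a : Fin n →₀ ℕ) with hfa
    set fb := (hinf.natEmbedding _ b : Fin n →₀ ℕ) with hfb
    have hptle : ∀ j, fa j ≤ fb j := fun j => hle j
    have hane : fa ≠ fb := fun h => (Nat.ne_of_lt hab) (hinf.natEmbedding _ |>.injective (Subtype.ext h))
    apply hres
    refine ⟨fb - fa, ?_, ?_⟩
    · have e1 : ∀ j, (((fb - fa) j : ℕ) : ℂ) = (fb j : ℂ) - (fa j : ℂ) := by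
        intro j
        rw [Finsupp.tsub_apply, Nat.cast_sub (hptle j)]
      calc ∑ j, (((fb - fa) j : ℕ) : ℂ) * lam j
          = ∑ j, ((fb j : ℂ) * lam j - (fa j : ℂ) * lam j) := by
            apply Finset.sum_congr rfl; intro j _; rw [e1 j, sub_mul]
        _ = (∑ j, (fb j : ℂ) * lam j) - ∑ j, (fa j : ℂ) * lam j := Finset.sum_sub_distrib _ _
        _ = lam i - lam i := by
            rw [(hinf.natEmbedding _ b).2, (hinf.natEmbedding _ a).2]
        _ = 0 := sub_self _
    · by_contra h0
      push_neg at h0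
      have hz : ∀ j ∈ Finset.univ, (fb - fa) j = 0 :=
        (Finset.sum_eq_zero_iff).mp (Nat.le_zero.mp h0)
      apply hane
      ext j
      have := hz j (mem_univ j)
      rw [Finsupp.tsub_apply] at this
      have := hptle j
      omega
  -- the full resonance set is finite
  have hPfin : {p : Fin n × (Fin n →₀ ℕ) | (∑ j, (p.2 j : ℂ) * lam j) = lam p.1}.Finite := by
    apply Set.Finite.subset (Set.finite_iUnion (fun i => (hfin i).image (Prod.mk i)))
    intro p hp
    exact Set.mem_iUnion.mpr ⟨p.1, ⟨p.2, hp, rfl⟩⟩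
  set F := hPfin.toFinset with hF
  obtain ⟨g, hcent, hli⟩ := H (F.card + 1)
  let L : FVF n →ₗ[ℂ] (F → ℂ) :=
    { toFun := fun h p => coeff (R := ℂ) (p : Fin n × (Fin n →₀ ℕ)).2 (h (p : Fin n × (Fin n →₀ ℕ)).1),
      map_add' := fun x y => by funext p; simp [Pi.add_apply],
      map_smul' := fun c x => by funext p; simp [MvPowerSeries.coeff_smul] }
  have hLg : LinearIndependent ℂ (fun k => L (g k)) := by
    rw [Fintype.linearIndependent_iff]
    intro c hc
    have hsum0 : ∑ k, c k • g k = 0 := by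
      set h := ∑ k, c k • g k with hh
      have hLh : L h = 0 := by
        rw [hh, map_sum]
        simp only [map_smul]
        exact hc
      have hcen : ∀ i (m : Fin n →₀ ℕ), (∑ j, (m j : ℂ) * lam j) ≠ lam i →
          coeff (R := ℂ) m (h i) = 0 := by
        intro i m hne
        rw [hh, Finset.sum_apply, map_sum]
        apply Finset.sum_eq_zero
        intro k _
        rw [Pi.smul_apply, MvPowerSeries.coeff_smul,
          (cent_iff lam (g k)).mp (hcent k) i m hne, mul_zero]
      funext i
      ext m
      rw [Pi.zero_apply, map_zero]
      by_cases hwm : (∑ j, (m j : ℂ) * lam j) = lam i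
      · have hmem : (i, m) ∈ F := hPfin.mem_toFinset.mpr hwm
        have := congrFun hLh ⟨(i, m), hmem⟩
        simpa [L] using this
      · exact hcen i m hwm
    exact fun k => (Fintype.linearIndependent_iff.mp hli) c hsum0 k
  have hcard := hLg.fintype_card_le_finrank
  rw [Module.finrank_pi, Fintype.card_coe, Fintype.card_fin] at hcard
  omega

end St5

/-- For `A_s = diag(λ₁,…,λ_n)` the formal centralizer of `A_s`
is infinite dimensional over ℂ iff there is a nontrivial nonnegative integer
relation `⟨d,λ⟩ = 0`; equivalently iff the corresponding monomial is a first
integral of `ẋ = A_s x`; equivalently iff `ẋ = A_s x` admits a nonconstant formal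
first integral. -/
theorem stmt_5 {n : ℕ} (lam : Fin n → ℂ) :
    ((∀ N : ℕ, ∃ g : Fin N → FVF n,
        (∀ i, fbr (linVF (Matrix.diagonal lam)) (g i) = 0) ∧ LinearIndependent ℂ g)
      ↔ (∃ d : Fin n →₀ ℕ, (∑ i, (d i : ℂ) * lam i = 0) ∧ 0 < ∑ i, d i)) ∧
    ((∃ d : Fin n →₀ ℕ, (∑ i, (d i : ℂ) * lam i = 0) ∧ 0 < ∑ i, d i)
      ↔ (∃ d : Fin n →₀ ℕ, 0 < (∑ i, d i) ∧
          lieD (linVF (Matrix.diagonal lam)) (MvPowerSeries.monomial (R := ℂ) d 1) = 0)) ∧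
    ((∃ d : Fin n →₀ ℕ, (∑ i, (d i : ℂ) * lam i = 0) ∧ 0 < ∑ i, d i)
      ↔ (∃ φ : MvPowerSeries (Fin n) ℂ,
          lieD (linVF (Matrix.diagonal lam)) φ = 0 ∧ ¬ constPS φ)) := by
  exact ⟨⟨St5.part1_fwd lam, fun h => St5.part1_rev lam h⟩, St5.part2 lam, St5.part3 lam⟩
end

section
/- Let A_s = diag(λ₁,…,λ_n) be such that the formal centralizer 𝒞^for(A_s) is finite dimensional over ℂ (equivalently, ẋ = A_s x admits no nonconstant formal first integral). Then for any formal vector field f = Ax + ⋯ in Poincaré–Dulac normal form with semisimple linear part A_s, the formal normalizer satisfies 𝒩^for(f) = 𝒞^for(f) + {βf : β ∈ ℂ[[x₁,…,x_n]]}. -/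
open Finset

namespace Stmt6
open MvPowerSeries
variable {n : ℕ}

noncomputable def adg (m : Fin n →₀ ℕ) : Finset ((Fin n →₀ ℕ) × (Fin n →₀ ℕ)) := Finset.HasAntidiagonal.antidiagonal m

lemma mem_adg {m : Fin n →₀ ℕ} {p : (Fin n →₀ ℕ) × (Fin n →₀ ℕ)} :
    p ∈ adg m ↔ p.1 + p.2 = m := Finset.HasAntidiagonal.mem_antidiagonal

lemma coeff_mul' (m : Fin n →₀ ℕ) (φ ψ : MvPowerSeries (Fin n) ℂ) :
    coeff (R := ℂ) m (φ * ψ) = ∑ p ∈ adg m, coeff (R := ℂ) p.1 φ * coeff (R := ℂ) p.2 ψ := by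
  classical
  exact MvPowerSeries.coeff_mul (R := ℂ) m φ ψ

lemma coeff_psD (i : Fin n) (φ : MvPowerSeries (Fin n) ℂ) (m : Fin n →₀ ℕ) :
    coeff (R := ℂ) m (psD i φ) = ((m i : ℂ) + 1) * coeff (R := ℂ) (m + Finsupp.single i 1) φ := rfl

lemma psD_add (i : Fin n) (φ ψ : MvPowerSeries (Fin n) ℂ) :
    psD i (φ + ψ) = psD i φ + psD i ψ := by
  ext m
  simp [coeff_psD, map_add, mul_add]

lemma aux_sum (i : Fin n) (m : Fin n →₀ ℕ) (φ ψ : MvPowerSeries (Fin n) ℂ) :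
    ∑ p ∈ adg (m + Finsupp.single i 1), (p.1 i : ℂ) * (coeff (R := ℂ) p.1 φ * coeff (R := ℂ) p.2 ψ)
      = ∑ q ∈ adg m, ((q.1 i : ℂ) + 1) * (coeff (R := ℂ) (q.1 + Finsupp.single i 1) φ * coeff (R := ℂ) q.2 ψ) := by
  classical
  rw [← Finset.sum_filter_of_ne (s := adg (m + Finsupp.single i 1))
      (p := fun p => p.1 i ≠ 0) (f := fun p => (p.1 i : ℂ) * (coeff (R := ℂ) p.1 φ * coeff (R := ℂ) p.2 ψ))]
  · refine (Finset.sum_bij' (fun q _ => (q.1 + Finsupp.single i 1, q.2))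
      (fun p _ => (p.1 - Finsupp.single i 1, p.2)) ?_ ?_ ?_ ?_ ?_).symm
    · rintro ⟨k, l⟩ hq
      rw [mem_adg] at hq
      simp only [Finset.mem_filter]
      constructor
      · rw [mem_adg]
        show k + Finsupp.single i 1 + l = m + Finsupp.single i 1
        rw [add_right_comm, hq]
      · simp [Finsupp.add_apply, Finsupp.single_apply]
    · rintro ⟨k, l⟩ hp
      simp only [Finset.mem_filter, mem_adg] at hp
      obtain ⟨hkl, hki⟩ := hp
      have hle : Finsupp.single i 1 ≤ k := by
        rw [Finsupp.single_le_iff]; omega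
      rw [mem_adg]
      have h1 : k - Finsupp.single i 1 + Finsupp.single i 1 = k := tsub_add_cancel_of_le hle
      have : (k - Finsupp.single i 1 + l) + Finsupp.single i 1 = m + Finsupp.single i 1 := by
        rw [add_right_comm, h1, hkl]
      exact add_right_cancel this
    · rintro ⟨k, l⟩ _
      simp
    · rintro ⟨k, l⟩ hp
      simp only [Finset.mem_filter, mem_adg] at hp
      have hle : Finsupp.single i 1 ≤ k := by
        rw [Finsupp.single_le_iff]; omega
      simp [tsub_add_cancel_of_le hle]
    · rintro ⟨k, l⟩ _
      simp only [Finsupp.add_apply, Finsupp.single_apply, if_pos rfl]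
      push_cast
      ring
  · rintro ⟨k, l⟩ _ h hk0
    apply h
    simp [hk0]

lemma psD_mul (i : Fin n) (φ ψ : MvPowerSeries (Fin n) ℂ) :
    psD i (φ * ψ) = psD i φ * ψ + φ * psD i ψ := by
  ext m
  rw [coeff_psD, map_add, coeff_mul', coeff_mul', coeff_mul']
  have step1 : ((m i : ℂ) + 1) * ∑ p ∈ adg (m + Finsupp.single i 1), coeff (R := ℂ) p.1 φ * coeff (R := ℂ) p.2 ψ
      = ∑ p ∈ adg (m + Finsupp.single i 1), ((p.1 i : ℂ) * (coeff (R := ℂ) p.1 φ * coeff (R := ℂ) p.2 ψ)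
          + (p.2 i : ℂ) * (coeff (R := ℂ) p.1 φ * coeff (R := ℂ) p.2 ψ)) := by
    rw [Finset.mul_sum]
    refine Finset.sum_congr rfl ?_
    rintro ⟨k, l⟩ hp
    rw [mem_adg] at hp
    have : k i + l i = m i + 1 := by
      have := congrArg (fun z => z i) hp
      simpa [Finsupp.add_apply, Finsupp.single_apply] using this
    have hc : ((k i : ℂ) + l i) = (m i : ℂ) + 1 := by exact_mod_cast congrArg (Nat.cast (R := ℂ)) this
    rw [← add_mul, hc]
  rw [step1, Finset.sum_add_distrib]
  congr 1
  · rw [aux_sum i m φ ψ]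
    refine Finset.sum_congr rfl ?_
    rintro ⟨k, l⟩ _
    rw [coeff_psD]
    ring
  · have swap1 : ∑ p ∈ adg (m + Finsupp.single i 1), (p.2 i : ℂ) * (coeff (R := ℂ) p.1 φ * coeff (R := ℂ) p.2 ψ)
        = ∑ p ∈ adg (m + Finsupp.single i 1), (p.1 i : ℂ) * (coeff (R := ℂ) p.1 ψ * coeff (R := ℂ) p.2 φ) := by
      refine Finset.sum_nbij' (fun p => (p.2, p.1)) (fun p => (p.2, p.1)) ?_ ?_ ?_ ?_ ?_ <;>
        (rintro ⟨k, l⟩ hp) <;> simp_all [mem_adg, add_comm, mul_comm, mul_left_comm]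
    have swap2 : ∑ q ∈ adg m, ((q.1 i : ℂ) + 1) * (coeff (R := ℂ) (q.1 + Finsupp.single i 1) ψ * coeff (R := ℂ) q.2 φ)
        = ∑ q ∈ adg m, ((q.2 i : ℂ) + 1) * (coeff (R := ℂ) q.1 φ * coeff (R := ℂ) (q.2 + Finsupp.single i 1) ψ) := by
      refine Finset.sum_nbij' (fun p => (p.2, p.1)) (fun p => (p.2, p.1)) ?_ ?_ ?_ ?_ ?_ <;>
        (rintro ⟨k, l⟩ hp) <;> simp_all [mem_adg, add_comm, mul_comm, mul_left_comm]
    rw [swap1, aux_sum i m ψ φ, swap2]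
    refine Finset.sum_congr rfl ?_
    rintro ⟨k, l⟩ _
    rw [coeff_psD]
    ring

def deg (m : Fin n →₀ ℕ) : ℕ := ∑ i, m i
def wt (m : Fin n →₀ ℕ) : ℕ := ∑ i : Fin n, i.val * m i
def nu (m : Fin n →₀ ℕ) : ℕ := n * (deg m)^2 + wt m

lemma deg_add (a b : Fin n →₀ ℕ) : deg (a + b) = deg a + deg b := by
  simp [deg, Finsupp.add_apply, Finset.sum_add_distrib]
lemma wt_add (a b : Fin n →₀ ℕ) : wt (a + b) = wt a + wt b := by
  simp [wt, Finsupp.add_apply, Nat.mul_add, Finset.sum_add_distrib]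
lemma deg_eq_zero_iff (m : Fin n →₀ ℕ) : deg m = 0 ↔ m = 0 := by
  rw [deg, Finset.sum_eq_zero_iff]
  constructor
  · intro h; ext i; exact h i (Finset.mem_univ i)
  · rintro rfl i _; rfl
lemma deg_single (j : Fin n) : deg (Finsupp.single j 1) = 1 := by
  rw [deg]
  rw [Finset.sum_eq_single j] <;> simp [Finsupp.single_apply]
  tauto
lemma wt_single (j : Fin n) : wt (Finsupp.single j 1) = j.val := by
  rw [wt]
  rw [Finset.sum_eq_single j] <;> simp [Finsupp.single_apply]
  tauto
lemma wt_le (m : Fin n →₀ ℕ) : wt m ≤ n * deg m := by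
  rw [wt, deg, Finset.mul_sum]
  exact Finset.sum_le_sum fun i _ => Nat.mul_le_mul_right _ (le_of_lt i.isLt)
lemma npos_of_ne_zero {m : Fin n →₀ ℕ} (h : m ≠ 0) : 0 < n := by
  rcases Nat.eq_zero_or_pos n with h0 | h0
  · exfalso; apply h; ext i; exact absurd i.isLt (by omega)
  · exact h0
lemma nu_lt_of_deg_lt {p m : Fin n →₀ ℕ} (h : deg p < deg m) : nu p < nu m := by
  have hn : 0 < n := by
    apply npos_of_ne_zero (m := m)
    intro h0
    rw [h0] at h
    simp [(deg_eq_zero_iff (0 : Fin n →₀ ℕ)).2 rfl] at h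
  have h1 : wt p ≤ n * deg p := wt_le p
  have h2 : deg p + 1 ≤ deg m := h
  rw [nu, nu]
  have h4 : n * (deg p)^2 + n * deg p < n * (deg p + 1)^2 := by nlinarith
  have h3 : n * (deg p + 1)^2 ≤ n * (deg m)^2 :=
    Nat.mul_le_mul_left _ (Nat.pow_le_pow_left h2 2)
  omega
lemma nu_lt_of_wt_lt {p m : Fin n →₀ ℕ} (h1 : deg p = deg m) (h2 : wt p < wt m) :
    nu p < nu m := by
  rw [nu, nu, h1]; omega
lemma eq_single_of_deg_one {k : Fin n →₀ ℕ} (h : deg k = 1) : ∃ r, k = Finsupp.single r 1 := by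
  have hne : k ≠ 0 := by
    intro h0; rw [h0, (deg_eq_zero_iff (0 : Fin n →₀ ℕ)).2 rfl] at h; simp at h
  obtain ⟨r, hr⟩ : ∃ r, k r ≠ 0 := by
    by_contra hc
    push_neg at hc
    exact hne (Finsupp.ext fun i => hc i)
  have hsum : k r + ∑ i ∈ Finset.univ.erase r, k i = 1 := by
    rw [Finset.add_sum_erase _ _ (Finset.mem_univ r)]; exact h
  have hkr : k r = 1 := by omega
  have hrest : ∀ i ∈ Finset.univ.erase r, k i = 0 := by
    rw [← Finset.sum_eq_zero_iff]; omega
  refine ⟨r, ?_⟩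
  ext i
  rcases eq_or_ne i r with rfl | hir
  · simp [hkr]
  · rw [Finsupp.single_apply, if_neg (Ne.symm hir)]
    exact hrest i (Finset.mem_erase.2 ⟨hir, Finset.mem_univ i⟩)

lemma linVF_diag (lam : Fin n → ℂ) (j : Fin n) :
    linVF (Matrix.diagonal lam) j = MvPowerSeries.C (σ := Fin n) (R := ℂ) (lam j) * MvPowerSeries.X j := by
  rw [linVF]
  rw [Finset.sum_eq_single j]
  · rw [Matrix.diagonal_apply_eq]
  · intro k _ hk
    rw [Matrix.diagonal_apply_ne _ (Ne.symm hk)]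
    simp
  · simp

lemma coeff_lieD_diag (lam : Fin n → ℂ) (φ : MvPowerSeries (Fin n) ℂ) (m : Fin n →₀ ℕ) :
    coeff (R := ℂ) m (lieD (linVF (Matrix.diagonal lam)) φ)
      = (∑ i, lam i * (m i : ℂ)) * coeff (R := ℂ) m φ := by
  classical
  rw [lieD, map_sum, Finset.sum_mul]
  refine Finset.sum_congr rfl ?_
  intro j _
  rw [linVF_diag, mul_assoc, coeff_C_mul, X_def, coeff_monomial_mul]
  by_cases hle : Finsupp.single j 1 ≤ m
  · rw [if_pos hle, coeff_psD]
    have hmj : 1 ≤ m j := Finsupp.single_le_iff.1 hle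
    have h1 : (m - Finsupp.single j 1) + Finsupp.single j 1 = m := tsub_add_cancel_of_le hle
    rw [h1]
    have h2 : (m - Finsupp.single j 1 : Fin n →₀ ℕ) j = m j - 1 := by
      rw [Finsupp.tsub_apply, Finsupp.single_apply]
      simp
    rw [h2]
    have h3 : ((m j - 1 : ℕ) : ℂ) + 1 = (m j : ℂ) := by
      have h4 : (m j - 1) + 1 = m j := by omega
      exact_mod_cast congrArg (Nat.cast (R := ℂ)) h4
    rw [h3]
    ring
  · rw [if_neg hle]
    have hmj : m j = 0 := by
      by_contra hc
      exact hle (Finsupp.single_le_iff.2 (by omega))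
    rw [hmj]
    push_cast
    ring

lemma nonres (lam : Fin n → ℂ)
    (hfin : ∀ φ : MvPowerSeries (Fin n) ℂ,
      lieD (linVF (Matrix.diagonal lam)) φ = 0 → constPS φ) :
    ∀ m : Fin n →₀ ℕ, m ≠ 0 → (∑ i, lam i * (m i : ℂ)) ≠ 0 := by
  intro m hm hres
  have h1 : lieD (linVF (Matrix.diagonal lam)) (monomial (R := ℂ) m 1) = 0 := by
    ext m'
    rw [coeff_lieD_diag, map_zero]
    rcases eq_or_ne m' m with rfl | hne
    · rw [hres, zero_mul]
    · rw [coeff_monomial_ne hne, mul_zero]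
  have h2 := hfin _ h1 m hm
  rw [coeff_monomial_same] at h2
  exact one_ne_zero h2

/-- The coefficients of a solution `β` of `X_f β = φ - φ(0)`, by recursion on `nu`. -/
noncomputable def bco (f : FVF n) (lam : Fin n → ℂ) (φ : MvPowerSeries (Fin n) ℂ)
    (m : Fin n →₀ ℕ) : ℂ :=
  (MvPowerSeries.coeff (R := ℂ) m φ - (if m = 0 then MvPowerSeries.coeff (R := ℂ) 0 φ else 0)
    - ∑ j : Fin n, ∑ p ∈ adg m,
        if h : nu (p.2 + Finsupp.single j 1) < nu m
        then MvPowerSeries.coeff (R := ℂ) p.1 (f j) *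
          (((p.2 j : ℂ) + 1) * bco f lam φ (p.2 + Finsupp.single j 1))
        else 0) / (∑ i, lam i * (m i : ℂ))
termination_by nu m
decreasing_by exact h

noncomputable def bps (f : FVF n) (lam : Fin n → ℂ) (φ : MvPowerSeries (Fin n) ℂ) :
    MvPowerSeries (Fin n) ℂ := bco f lam φ

lemma coeff_bps (f : FVF n) (lam : Fin n → ℂ) (φ : MvPowerSeries (Fin n) ℂ)
    (m : Fin n →₀ ℕ) : coeff (R := ℂ) m (bps f lam φ) = bco f lam φ m := rfl

section Master

variable (lam : Fin n → ℂ) (An : Matrix (Fin n) (Fin n) ℂ)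
  (hupper : ∀ i j : Fin n, j ≤ i → An i j = 0)
  (f : FVF n) (hlin : hasLin f (Matrix.diagonal lam + An))

include hupper hlin in
lemma coeff_f_zero {k l m : Fin n →₀ ℕ} {j : Fin n} (hklm : k + l = m)
    (hnu : ¬ nu (l + Finsupp.single j 1) < nu m) (hk : k ≠ Finsupp.single j 1) :
    coeff (R := ℂ) k (f j) = 0 := by
  have hdeg : deg k + deg l = deg m := by rw [← deg_add, hklm]
  have hdq : deg (l + Finsupp.single j 1) = deg l + 1 := by rw [deg_add, deg_single]
  rcases Nat.lt_or_ge (deg k) 2 with h2 | h2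
  · interval_cases hdk : deg k
    · have : k = 0 := (deg_eq_zero_iff k).1 hdk
      rw [this]
      exact hlin.1 j
    · obtain ⟨r, rfl⟩ := eq_single_of_deg_one hdk
      have hrj : r ≠ j := fun h => hk (by rw [h])
      have hdq2 : deg (l + Finsupp.single j 1) = deg m := by omega
      have hwt : ¬ wt (l + Finsupp.single j 1) < wt m := fun hw =>
        hnu (nu_lt_of_wt_lt hdq2 hw)
      have hwm : wt m = r.val + wt l := by
        rw [← hklm, wt_add, wt_single]
      have hwq : wt (l + Finsupp.single j 1) = wt l + j.val := by
        rw [wt_add, wt_single]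
      have hrle : r.val ≤ j.val := by omega
      have hAn : An j r = 0 := hupper j r (by exact hrle)
      rw [hlin.2 j r, Matrix.add_apply, hAn, Matrix.diagonal_apply_ne _ (Ne.symm hrj), zero_add]
  · exfalso
    apply hnu
    apply nu_lt_of_deg_lt
    omega

include hupper hlin in
lemma diag_sum (B : MvPowerSeries (Fin n) ℂ) (m : Fin n →₀ ℕ) (j : Fin n) :
    ∑ p ∈ adg m, (if nu (p.2 + Finsupp.single j 1) < nu m then 0
        else coeff (R := ℂ) p.1 (f j) * (((p.2 j : ℂ) + 1) * coeff (R := ℂ) (p.2 + Finsupp.single j 1) B))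
      = lam j * ((m j : ℂ) * coeff (R := ℂ) m B) := by
  classical
  by_cases hmj : m j = 0
  · rw [Finset.sum_eq_zero, hmj]
    · push_cast; ring
    rintro ⟨k, l⟩ hp
    rw [mem_adg] at hp
    by_cases hc : nu (l + Finsupp.single j 1) < nu m
    · rw [if_pos hc]
    · rw [if_neg hc]
      have hk : k ≠ Finsupp.single j 1 := by
        intro hk1
        have : k j ≤ m j := by
          have := congrArg (fun z => z j) hp
          simp only [Finsupp.add_apply] at this
          omega
        rw [hk1] at this
        simp [Finsupp.single_apply, hmj] at this
      rw [coeff_f_zero lam An hupper f hlin hp hc hk]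
      ring
  · have hle : Finsupp.single j 1 ≤ m := Finsupp.single_le_iff.2 (by omega)
    have hmem : (Finsupp.single j 1, m - Finsupp.single j 1) ∈ adg m := by
      rw [mem_adg]
      exact add_tsub_cancel_of_le hle
    rw [Finset.sum_eq_single_of_mem _ hmem]
    · have hq : (m - Finsupp.single j 1) + Finsupp.single j 1 = m := tsub_add_cancel_of_le hle
      rw [hq, if_neg (lt_irrefl (nu m)), hlin.2 j j, Matrix.add_apply,
        Matrix.diagonal_apply_eq, hupper j j le_rfl, add_zero]
      have h2 : (m - Finsupp.single j 1 : Fin n →₀ ℕ) j = m j - 1 := by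
        rw [Finsupp.tsub_apply, Finsupp.single_apply]
        simp
      rw [h2]
      have h3 : ((m j - 1 : ℕ) : ℂ) + 1 = (m j : ℂ) := by
        have h4 : (m j - 1) + 1 = m j := by omega
        exact_mod_cast congrArg (Nat.cast (R := ℂ)) h4
      rw [h3]
    · rintro ⟨k, l⟩ hp hne
      rw [mem_adg] at hp
      by_cases hc : nu (l + Finsupp.single j 1) < nu m
      · rw [if_pos hc]
      · rw [if_neg hc]
        have hk : k ≠ Finsupp.single j 1 := by
          intro hk1
          apply hne
          subst hk1
          have hl : l = m - Finsupp.single j 1 :=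
            eq_tsub_of_add_eq (by rw [add_comm]; exact hp)
          rw [hl]
        rw [coeff_f_zero lam An hupper f hlin hp hc hk]
        ring

include hupper hlin in
lemma coeff_lieD_bps (hres : ∀ m : Fin n →₀ ℕ, m ≠ 0 → (∑ i, lam i * (m i : ℂ)) ≠ 0)
    (φ : MvPowerSeries (Fin n) ℂ) (m : Fin n →₀ ℕ) :
    coeff (R := ℂ) m (lieD f (bps f lam φ)) =
      coeff (R := ℂ) m φ - (if m = 0 then coeff (R := ℂ) 0 φ else 0) := by
  classical
  set B := bps f lam φ with hBdef
  set R := (∑ i, lam i * (m i : ℂ)) with hRdef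
  set δ := (if m = 0 then coeff (R := ℂ) 0 φ else 0) with hδdef
  set S := ∑ j : Fin n, ∑ p ∈ adg m,
      (if nu (p.2 + Finsupp.single j 1) < nu m
       then coeff (R := ℂ) p.1 (f j) * (((p.2 j : ℂ) + 1) * coeff (R := ℂ) (p.2 + Finsupp.single j 1) B)
       else 0) with hSdef
  have expand : coeff (R := ℂ) m (lieD f B)
      = ∑ j, ∑ p ∈ adg m, coeff (R := ℂ) p.1 (f j) *
          (((p.2 j : ℂ) + 1) * coeff (R := ℂ) (p.2 + Finsupp.single j 1) B) := by
    rw [lieD, map_sum]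
    refine Finset.sum_congr rfl fun j _ => ?_
    rw [coeff_mul']
    refine Finset.sum_congr rfl fun p _ => ?_
    rw [coeff_psD]
  have hsplit : coeff (R := ℂ) m (lieD f B) = S + ∑ j : Fin n, ∑ p ∈ adg m,
      (if nu (p.2 + Finsupp.single j 1) < nu m then 0
       else coeff (R := ℂ) p.1 (f j) * (((p.2 j : ℂ) + 1) * coeff (R := ℂ) (p.2 + Finsupp.single j 1) B)) := by
    rw [expand, hSdef, ← Finset.sum_add_distrib]
    refine Finset.sum_congr rfl fun j _ => ?_
    rw [← Finset.sum_add_distrib]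
    refine Finset.sum_congr rfl fun p _ => ?_
    split_ifs <;> ring
  have hD : ∀ j : Fin n, ∑ p ∈ adg m,
      (if nu (p.2 + Finsupp.single j 1) < nu m then 0
       else coeff (R := ℂ) p.1 (f j) * (((p.2 j : ℂ) + 1) * coeff (R := ℂ) (p.2 + Finsupp.single j 1) B))
      = lam j * ((m j : ℂ) * coeff (R := ℂ) m B) := fun j =>
    diag_sum lam An hupper f hlin B m j
  have hDsum : (∑ j : Fin n, lam j * ((m j : ℂ) * coeff (R := ℂ) m B)) = R * coeff (R := ℂ) m B := by
    rw [hRdef, Finset.sum_mul]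
    exact Finset.sum_congr rfl fun j _ => by ring
  have hBm : coeff (R := ℂ) m B = (coeff (R := ℂ) m φ - δ - S) / R := by
    rw [hBdef, coeff_bps, bco]
    simp only [dite_eq_ite]
    rfl
  rw [hsplit, Finset.sum_congr rfl fun j _ => hD j, hDsum]
  rcases eq_or_ne m 0 with rfl | hm
  · have hR0 : R = 0 := by
      rw [hRdef]
      refine Finset.sum_eq_zero fun i _ => by simp
    have hS0 : S = 0 := by
      rw [hSdef]
      refine Finset.sum_eq_zero fun j _ => ?_
      refine Finset.sum_eq_zero fun p _ => ?_
      rw [if_neg]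
      intro hcon
      have : nu (0 : Fin n →₀ ℕ) = 0 := by
        rw [nu, wt, deg]
        simp
      omega
    rw [hS0, hR0, hδdef, if_pos rfl]
    ring
  · have hR : R ≠ 0 := hres m hm
    rw [hBm]
    field_simp
    ring

include hupper hlin in
lemma lieD_bps (hres : ∀ m : Fin n →₀ ℕ, m ≠ 0 → (∑ i, lam i * (m i : ℂ)) ≠ 0)
    (φ : MvPowerSeries (Fin n) ℂ) :
    lieD f (bps f lam φ) = φ - MvPowerSeries.C (σ := Fin n) (R := ℂ) (coeff (R := ℂ) 0 φ) := by
  classical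
  ext m
  rw [coeff_lieD_bps lam An hupper f hlin hres φ m, map_sub, coeff_C]

end Master

section Algebra

lemma lieD_add_vf (g h : FVF n) (φ : MvPowerSeries (Fin n) ℂ) :
    lieD (g + h) φ = lieD g φ + lieD h φ := by
  rw [lieD, lieD, lieD, ← Finset.sum_add_distrib]
  exact Finset.sum_congr rfl fun j _ => by rw [Pi.add_apply, add_mul]

lemma lieD_add_arg (g : FVF n) (φ ψ : MvPowerSeries (Fin n) ℂ) :
    lieD g (φ + ψ) = lieD g φ + lieD g ψ := by
  rw [lieD, lieD, lieD, ← Finset.sum_add_distrib]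
  exact Finset.sum_congr rfl fun j _ => by rw [psD_add, mul_add]

lemma fbr_add_left (g h f : FVF n) : fbr (g + h) f = fbr g f + fbr h f := by
  funext i
  show lieD (g + h) (f i) - lieD f (g i + h i)
    = (lieD g (f i) - lieD f (g i)) + (lieD h (f i) - lieD f (h i))
  rw [lieD_add_vf, lieD_add_arg]
  ring

lemma fbr_smul (β : MvPowerSeries (Fin n) ℂ) (f : FVF n) :
    fbr (psSMul β f) f = psSMul (-(lieD f β)) f := by
  funext i
  show lieD (psSMul β f) (f i) - lieD f (β * f i) = -(lieD f β) * f i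
  have e1 : lieD (psSMul β f) (f i) = ∑ j, f j * (β * psD j (f i)) := by
    rw [lieD]
    exact Finset.sum_congr rfl fun j _ => by
      show β * f j * psD j (f i) = _
      ring
  have e2 : lieD f (β * f i) = (∑ j, f j * psD j β) * f i + ∑ j, f j * (β * psD j (f i)) := by
    rw [lieD, Finset.sum_mul, ← Finset.sum_add_distrib]
    exact Finset.sum_congr rfl fun j _ => by rw [psD_mul]; ring
  rw [e1, e2, lieD]
  ring

end Algebra

section Trace

lemma coeff_zero_lieD (g : FVF n) (φ : MvPowerSeries (Fin n) ℂ) :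
    coeff (R := ℂ) 0 (lieD g φ) = ∑ j, coeff (R := ℂ) 0 (g j) * coeff (R := ℂ) (Finsupp.single j 1) φ := by
  classical
  rw [lieD, map_sum]
  refine Finset.sum_congr rfl fun j _ => ?_
  rw [coeff_mul']
  rw [show adg (0 : Fin n →₀ ℕ) = {(0, 0)} from rfl, Finset.sum_singleton]
  congr 1
  rw [coeff_psD]
  simp

lemma coeff_single_mul (r : Fin n) (ψ χ : MvPowerSeries (Fin n) ℂ) :
    coeff (R := ℂ) (Finsupp.single r 1) (ψ * χ)
      = coeff (R := ℂ) 0 ψ * coeff (R := ℂ) (Finsupp.single r 1) χ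
        + coeff (R := ℂ) (Finsupp.single r 1) ψ * coeff (R := ℂ) 0 χ := by
  classical
  rw [MvPowerSeries.coeff_mul, Finsupp.antidiagonal_single, Finset.sum_map]
  rw [show Finset.HasAntidiagonal.antidiagonal (1 : ℕ) = {(0, 1), (1, 0)} from rfl]
  rw [Finset.sum_insert (by decide), Finset.sum_singleton]
  simp [Finsupp.single_zero]

lemma coeff_single_lieD (g : FVF n) (φ : MvPowerSeries (Fin n) ℂ) (r : Fin n) :
    coeff (R := ℂ) (Finsupp.single r 1) (lieD g φ)
      = ∑ j, (coeff (R := ℂ) 0 (g j) * coeff (R := ℂ) (Finsupp.single r 1) (psD j φ)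
          + coeff (R := ℂ) (Finsupp.single r 1) (g j) * coeff (R := ℂ) (Finsupp.single j 1) φ) := by
  classical
  rw [lieD, map_sum]
  refine Finset.sum_congr rfl fun j _ => ?_
  rw [coeff_single_mul]
  congr 2
  rw [coeff_psD]
  simp

variable (lam : Fin n → ℂ) (An : Matrix (Fin n) (Fin n) ℂ)
  (hupper : ∀ i j : Fin n, j ≤ i → An i j = 0)
  (f : FVF n) (hlin : hasLin f (Matrix.diagonal lam + An))

include hupper hlin in
lemma const_mult_zero (hn : 0 < n)
    (hres : ∀ m : Fin n →₀ ℕ, m ≠ 0 → (∑ i, lam i * (m i : ℂ)) ≠ 0)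
    (h : FVF n) (c : ℂ)
    (hb : fbr h f = psSMul (MvPowerSeries.C (σ := Fin n) (R := ℂ) c) f) : c = 0 := by
  classical
  set A := Matrix.diagonal lam + An with hA
  have hlam : ∀ i : Fin n, lam i ≠ 0 := by
    intro i hli
    apply hres (Finsupp.single i 1) (by
      intro h0
      have := congrArg (fun z => z i) h0
      simp [Finsupp.single_apply] at this)
    rw [Finset.sum_eq_single i]
    · simp [hli]
    · intro b _ hbne
      simp [Finsupp.single_apply, Ne.symm hbne]
    · simp
  set v : Fin n → ℂ := fun j => coeff (R := ℂ) 0 (h j) with hv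
  have hveq : ∀ i, ∑ j, v j * A i j = 0 := by
    intro i
    have h1 := congrArg (coeff (R := ℂ) 0) (congrFun hb i)
    rw [show fbr h f i = lieD h (f i) - lieD f (h i) from rfl] at h1
    rw [show psSMul (MvPowerSeries.C (σ := Fin n) (R := ℂ) c) f i
        = MvPowerSeries.C (σ := Fin n) (R := ℂ) c * f i from rfl] at h1
    rw [map_sub, coeff_zero_lieD, coeff_zero_lieD, coeff_C_mul, hlin.1 i, mul_zero] at h1
    have h2 : ∑ j, coeff (R := ℂ) 0 (f j) * coeff (R := ℂ) (Finsupp.single j 1) (h i) = 0 :=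
      Finset.sum_eq_zero fun j _ => by rw [hlin.1 j, zero_mul]
    rw [h2, sub_zero] at h1
    calc ∑ j, v j * A i j = ∑ j, coeff (R := ℂ) 0 (h j) * coeff (R := ℂ) (Finsupp.single j 1) (f i) :=
      Finset.sum_congr rfl fun j _ => by rw [hlin.2 i j]
    _ = 0 := h1
  have hvzero : ∀ i, v i = 0 := by
    have key : ∀ k : ℕ, ∀ i : Fin n, n - i.val ≤ k → v i = 0 := by
      intro k
      induction k with
      | zero => intro i hi; omega
      | succ k ih =>
        intro i hi
        have h1 := hveq i
        rw [Finset.sum_eq_single i] at h1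
        · have : A i i = lam i := by
            rw [hA, Matrix.add_apply, Matrix.diagonal_apply_eq, hupper i i le_rfl, add_zero]
          rw [this] at h1
          exact (mul_eq_zero.1 h1).resolve_right (hlam i)
        · intro b _ hbne
          rcases lt_or_gt_of_ne hbne with hlt | hgt
          · -- b < i : A i b = 0
            have : A i b = 0 := by
              rw [hA, Matrix.add_apply, Matrix.diagonal_apply_ne _ (Ne.symm hbne),
                hupper i b (le_of_lt hlt), add_zero]
            rw [this, mul_zero]
          · -- b > i : v b = 0 by ih
            have : v b = 0 := ih b (by
              have : i.val < b.val := hgt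
              omega)
            rw [this, zero_mul]
        · simp
    intro i
    exact key n i (by omega)
  set Bm : Fin n → Fin n → ℂ := fun i j => coeff (R := ℂ) (Finsupp.single j 1) (h i) with hBm
  have hlin2 : ∀ i r, (∑ j, A i j * Bm j r) - (∑ j, A j r * Bm i j) = c * A i r := by
    intro i r
    have h1 := congrArg (coeff (R := ℂ) (Finsupp.single r 1)) (congrFun hb i)
    rw [show fbr h f i = lieD h (f i) - lieD f (h i) from rfl] at h1
    rw [show psSMul (MvPowerSeries.C (σ := Fin n) (R := ℂ) c) f i
        = MvPowerSeries.C (σ := Fin n) (R := ℂ) c * f i from rfl] at h1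
    rw [map_sub, coeff_single_lieD, coeff_single_lieD, coeff_C_mul, hlin.2 i r] at h1
    have e1 : ∑ j, (coeff (R := ℂ) 0 (h j) * coeff (R := ℂ) (Finsupp.single r 1) (psD j (f i))
        + coeff (R := ℂ) (Finsupp.single r 1) (h j) * coeff (R := ℂ) (Finsupp.single j 1) (f i))
        = ∑ j, A i j * Bm j r := by
      refine Finset.sum_congr rfl fun j _ => ?_
      rw [show coeff (R := ℂ) 0 (h j) = v j from rfl, hvzero j, zero_mul, zero_add, hlin.2 i j, hBm]
      ring
    have e2 : ∑ j, (coeff (R := ℂ) 0 (f j) * coeff (R := ℂ) (Finsupp.single r 1) (psD j (h i))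
        + coeff (R := ℂ) (Finsupp.single r 1) (f j) * coeff (R := ℂ) (Finsupp.single j 1) (h i))
        = ∑ j, A j r * Bm i j := by
      refine Finset.sum_congr rfl fun j _ => ?_
      rw [hlin.1 j, zero_mul, zero_add, hlin.2 j r, hBm]
    rw [e1, e2] at h1
    exact h1
  have htrace : (∑ r, ∑ j, A r j * Bm j r) - (∑ r, ∑ j, A j r * Bm r j) = c * ∑ r, A r r := by
    rw [Finset.mul_sum, ← Finset.sum_sub_distrib]
    exact Finset.sum_congr rfl fun r _ => hlin2 r r
  have hswap : (∑ r, ∑ j, A j r * Bm r j) = ∑ r, ∑ j, A r j * Bm j r := by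
    rw [Finset.sum_comm]
  rw [hswap, sub_self] at htrace
  have hAd : ∀ r, A r r = lam r := fun r => by
    rw [hA, Matrix.add_apply, Matrix.diagonal_apply_eq, hupper r r le_rfl, add_zero]
  have hsum : (∑ r, A r r) = ∑ r, lam r := Finset.sum_congr rfl fun r _ => hAd r
  rw [hsum] at htrace
  set m1 : Fin n →₀ ℕ := Finsupp.equivFunOnFinite.symm (fun _ => 1) with hm1
  have hm1ne : m1 ≠ 0 := by
    intro h0
    have := congrArg (fun z => z ⟨0, hn⟩) h0
    simp [hm1, Finsupp.equivFunOnFinite] at this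
  have hm1v : ∀ i, m1 i = 1 := fun i => rfl
  have hsne : (∑ r, lam r) ≠ 0 := by
    have := hres m1 hm1ne
    convert this using 1
    exact Finset.sum_congr rfl fun r _ => by rw [hm1v r]; simp
  rcases mul_eq_zero.1 htrace.symm with hc | hbad
  · exact hc
  · exact absurd hbad hsne

end Trace
end Stmt6

/-- If the formal centralizer of `A_s = diag(λ)` is finite
dimensional (equivalently, `ẋ = A_s x` has no nonconstant formal first integral),
then for any `f = Ax + ⋯` in Poincaré–Dulac normal form with semisimple linear
part `A_s` one has `𝒩^for(f) = 𝒞^for(f) + {βf : β ∈ ℂ[[x]]}`. -/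
theorem stmt_6 {n : ℕ} (lam : Fin n → ℂ) (An : Matrix (Fin n) (Fin n) ℂ)
    (hupper : ∀ i j : Fin n, j ≤ i → An i j = 0)
    (hcomm : Matrix.diagonal lam * An = An * Matrix.diagonal lam)
    (hfin : ∀ φ : MvPowerSeries (Fin n) ℂ,
      lieD (linVF (Matrix.diagonal lam)) φ = 0 → constPS φ)
    (f : FVF n) (hlin : hasLin f (Matrix.diagonal lam + An))
    (hPDNF : fbr (linVF (Matrix.diagonal lam)) f = 0) :
    ∀ g : FVF n,
      (∃ lam' : MvPowerSeries (Fin n) ℂ, fbr g f = psSMul lam' f) ↔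
      (∃ (h : FVF n) (β : MvPowerSeries (Fin n) ℂ),
        fbr h f = 0 ∧ g = h + psSMul β f) := by
  classical
  intro g
  constructor
  · rintro ⟨lam', hg⟩
    rcases Nat.eq_zero_or_pos n with hn | hn
    · subst hn
      refine ⟨g, 0, ?_, ?_⟩
      · funext i; exact i.elim0
      · funext i; exact i.elim0
    · have hres := Stmt6.nonres lam hfin
      set c := MvPowerSeries.coeff (R := ℂ) 0 lam' with hc
      set β := Stmt6.bps f lam lam' with hβ
      have hβeq : lieD f β = lam' - MvPowerSeries.C (σ := Fin n) (R := ℂ) c :=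
        Stmt6.lieD_bps lam An hupper f hlin hres lam'
      set h := g + psSMul β f with hh
      have hfbr : fbr h f = psSMul (MvPowerSeries.C (σ := Fin n) (R := ℂ) c) f := by
        rw [hh, Stmt6.fbr_add_left, hg, Stmt6.fbr_smul, hβeq]
        funext i
        show lam' * f i + (-(lam' - MvPowerSeries.C (σ := Fin n) (R := ℂ) c)) * f i
          = MvPowerSeries.C (σ := Fin n) (R := ℂ) c * f i
        ring
      have hc0 : c = 0 :=
        Stmt6.const_mult_zero lam An hupper f hlin hn hres h c hfbr
      refine ⟨h, -β, ?_, ?_⟩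
      · rw [hfbr, hc0]
        funext i
        show MvPowerSeries.C (σ := Fin n) (R := ℂ) 0 * f i = 0
        rw [map_zero, zero_mul]
      · funext i
        show g i = (g i + β * f i) + (-β) * f i
        ring
  · rintro ⟨h, β, hh, rfl⟩
    refine ⟨-(lieD f β), ?_⟩
    rw [Stmt6.fbr_add_left, hh, Stmt6.fbr_smul, zero_add]
end

section
/- Let B = diag(μ₁,…,μ_n) with all μ_i ≠ 0, and assume that every resonance relation ⟨m,μ⟩ − μ_j = 0 with m ∈ ℤ_{≥0}ⁿ implies m_j > 0, for each j = 1,…,n. Then the module 𝒞^pol(B) of polynomial vector fields commuting with B is a free module of rank n over the algebra I(B) of polynomial first integrals of B, generated by the vector fields Q_j(x) = x_je_j, 1 ≤ j ≤ n. -/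
open Finset

/-- Polynomial vector fields on ℂⁿ. -/
abbrev PVF (n : ℕ) := Fin n → MvPolynomial (Fin n) ℂ

/-- Lie derivative `X_g(φ) = Dφ·g`. -/
noncomputable def lieDP {n : ℕ} (g : PVF n) (φ : MvPolynomial (Fin n) ℂ) :
    MvPolynomial (Fin n) ℂ :=
  ∑ j, g j * MvPolynomial.pderiv j φ

/-- Lie bracket `[g,h] = Dh·g − Dg·h`. -/
noncomputable def pbr {n : ℕ} (g h : PVF n) : PVF n :=
  fun i => lieDP g (h i) - lieDP h (g i)

/-- The linear vector field `x ↦ Bx`. -/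
noncomputable def linVFP {n : ℕ} (B : Matrix (Fin n) (Fin n) ℂ) : PVF n :=
  fun i => ∑ j, MvPolynomial.C (B i j) * MvPolynomial.X j

/-- The vector field `Q_j(x) = x_j e_j`. -/
noncomputable def Qvf {n : ℕ} (j : Fin n) : PVF n :=
  fun i => if i = j then MvPolynomial.X j else 0

lemma linVFP_diag {n : ℕ} (μ : Fin n → ℂ) (i : Fin n) :
    linVFP (Matrix.diagonal μ) i = MvPolynomial.C (μ i) * MvPolynomial.X i := by
  rw [linVFP, Finset.sum_eq_single i]
  · simp [Matrix.diagonal_apply_eq]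
  · intro j _ hj
    simp [Matrix.diagonal_apply_ne _ (Ne.symm hj)]
  · simp

lemma coeff_X_mul_pderiv {n : ℕ} (j : Fin n) (φ : MvPolynomial (Fin n) ℂ)
    (m : Fin n →₀ ℕ) :
    MvPolynomial.coeff m (MvPolynomial.X j * MvPolynomial.pderiv j φ)
      = (m j : ℂ) * MvPolynomial.coeff m φ := by
  induction φ using MvPolynomial.induction_on' with
  | add p q hp hq => simp only [map_add, mul_add, MvPolynomial.coeff_add, hp, hq]
  | monomial m' c =>
    rw [MvPolynomial.pderiv_monomial]
    rw [show (MvPolynomial.X j : MvPolynomial (Fin n) ℂ)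
        = MvPolynomial.monomial (Finsupp.single j 1) 1 from rfl]
    rw [MvPolynomial.monomial_mul]
    rcases Nat.eq_zero_or_pos (m' j) with h0 | hpos
    · simp only [h0, Nat.cast_zero, mul_zero, MvPolynomial.monomial_zero,
        MvPolynomial.coeff_zero, MvPolynomial.coeff_monomial]
      split_ifs with h
      · subst h; simp [h0]
      · simp
    · have hle : Finsupp.single j 1 ≤ m' := by
        rw [Finsupp.single_le_iff]; omega
      rw [add_tsub_cancel_of_le hle]
      rw [MvPolynomial.coeff_monomial, MvPolynomial.coeff_monomial]
      split_ifs with h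
      · subst h; ring
      · simp

lemma lieDP_diag_coeff {n : ℕ} (μ : Fin n → ℂ) (φ : MvPolynomial (Fin n) ℂ)
    (m : Fin n →₀ ℕ) :
    MvPolynomial.coeff m (lieDP (linVFP (Matrix.diagonal μ)) φ)
      = (∑ i, (m i : ℂ) * μ i) * MvPolynomial.coeff m φ := by
  rw [lieDP, MvPolynomial.coeff_sum, Finset.sum_mul]
  refine Finset.sum_congr rfl fun j _ => ?_
  rw [linVFP_diag, mul_assoc, MvPolynomial.coeff_C_mul, coeff_X_mul_pderiv]
  ring

lemma lieDP_C_mul_X {n : ℕ} (g : PVF n) (a : ℂ) (i : Fin n) :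
    lieDP g (MvPolynomial.C a * MvPolynomial.X i) = MvPolynomial.C a * g i := by
  rw [lieDP, Finset.sum_eq_single i]
  · simp [MvPolynomial.pderiv_C_mul]; ring
  · intro j _ hj
    simp [MvPolynomial.pderiv_C_mul, MvPolynomial.pderiv_X_of_ne (Ne.symm hj)]
  · simp

lemma sum_add_single {n : ℕ} (μ : Fin n → ℂ) (m : Fin n →₀ ℕ) (i : Fin n) :
    (∑ k, (((m + Finsupp.single i 1 : Fin n →₀ ℕ) k : ℕ) : ℂ) * μ k)
      = (∑ k, (m k : ℂ) * μ k) + μ i := by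
  have : ∀ k, (((m + Finsupp.single i 1 : Fin n →₀ ℕ) k : ℕ) : ℂ) * μ k
      = (m k : ℂ) * μ k + (if i = k then μ k else 0) := by
    intro k
    simp only [Finsupp.add_apply, Finsupp.single_apply]
    push_cast
    split_ifs <;> ring
  rw [Finset.sum_congr rfl fun k _ => this k, Finset.sum_add_distrib,
    Finset.sum_ite_eq Finset.univ i μ]
  simp

/-- If `B = diag(μ₁,…,μ_n)` with all `μ_i ≠ 0` and every
resonance `⟨m,μ⟩ = μ_j` implies `m_j > 0`, then the module `𝒞^pol(B)` of
polynomial vector fields commuting with `B` is a free module of rank `n` over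
the algebra `I(B)` of polynomial first integrals, generated by
`Q_j(x) = x_j e_j`. -/
theorem stmt_12 {n : ℕ} (μ : Fin n → ℂ) (hμ : ∀ i, μ i ≠ 0)
    (hres : ∀ (m : Fin n → ℕ) (j : Fin n),
      (∑ i, (m i : ℂ) * μ i) = μ j → 0 < m j) :
    -- each generator Q_j lies in 𝒞^pol(B) :
    (∀ j, pbr (linVFP (Matrix.diagonal μ)) (Qvf j) = 0) ∧
    -- the Q_j generate 𝒞^pol(B) over I(B) :
    (∀ g : PVF n, pbr (linVFP (Matrix.diagonal μ)) g = 0 →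
      ∃ φ : Fin n → MvPolynomial (Fin n) ℂ,
        (∀ j, lieDP (linVFP (Matrix.diagonal μ)) (φ j) = 0) ∧
        ∀ i, g i = φ i * MvPolynomial.X i) ∧
    -- the Q_j are free over I(B) :
    (∀ φ : Fin n → MvPolynomial (Fin n) ℂ,
      (∀ j, lieDP (linVFP (Matrix.diagonal μ)) (φ j) = 0) →
      (∀ i, φ i * MvPolynomial.X i = 0) → ∀ i, φ i = 0) := by
  refine ⟨?_, ?_, ?_⟩
  · -- Q_j commutes with B
    intro j
    funext i
    rw [pbr]
    simp only [Pi.zero_apply, sub_eq_zero]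
    rw [linVFP_diag, lieDP_C_mul_X, Qvf]
    by_cases h : i = j
    · subst h
      simp only [eq_self_iff_true, if_true]
      apply MvPolynomial.ext
      intro m
      rw [lieDP_diag_coeff, MvPolynomial.coeff_C_mul]
      rcases eq_or_ne m (Finsupp.single i 1) with rfl | hm
      · have : (∑ k, ((Finsupp.single i 1 : Fin n →₀ ℕ) k : ℂ) * μ k) = μ i := by
          have := sum_add_single μ 0 i
          simpa using this
        rw [this]
      · have hz : MvPolynomial.coeff m (MvPolynomial.X i : MvPolynomial (Fin n) ℂ) = 0 := by
          rw [MvPolynomial.coeff_X', if_neg (by exact fun h => hm h.symm)]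
        rw [hz, mul_zero, mul_zero]
    · simp only [if_neg h, mul_zero]
      rw [lieDP]
      simp
  · -- generation
    intro g hg
    have key : ∀ i : Fin n, lieDP (linVFP (Matrix.diagonal μ)) (g i)
        = MvPolynomial.C (μ i) * g i := by
      intro i
      have := congrFun hg i
      rw [pbr] at this
      simp only [Pi.zero_apply, sub_eq_zero] at this
      rw [this, linVFP_diag, lieDP_C_mul_X]
    have hco : ∀ (i : Fin n) (m : Fin n →₀ ℕ), MvPolynomial.coeff m (g i) ≠ 0 →
        (∑ k, (m k : ℂ) * μ k) = μ i := by
      intro i m hm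
      have := congrArg (MvPolynomial.coeff m) (key i)
      rw [lieDP_diag_coeff, MvPolynomial.coeff_C_mul] at this
      exact mul_right_cancel₀ hm this
    have hdvd : ∀ i : Fin n, ∃ ψ : MvPolynomial (Fin n) ℂ,
        lieDP (linVFP (Matrix.diagonal μ)) ψ = 0 ∧ g i = ψ * MvPolynomial.X i := by
      intro i
      have hXdvd : MvPolynomial.X i ∣ g i := by
        conv_rhs => rw [← MvPolynomial.support_sum_monomial_coeff (g i)]
        apply Finset.dvd_sum
        intro m hm
        rw [MvPolynomial.mem_support_iff] at hm
        have hpos : 0 < m i := hres (fun k => m k) i (hco i m hm)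
        have hle : Finsupp.single i 1 ≤ m := by
          rw [Finsupp.single_le_iff]; omega
        refine ⟨MvPolynomial.monomial (m - Finsupp.single i 1) (MvPolynomial.coeff m (g i)), ?_⟩
        rw [show (MvPolynomial.X i : MvPolynomial (Fin n) ℂ)
            = MvPolynomial.monomial (Finsupp.single i 1) 1 from rfl,
          MvPolynomial.monomial_mul, add_tsub_cancel_of_le hle, one_mul]
      obtain ⟨ψ, hψ⟩ := hXdvd
      refine ⟨ψ, ?_, by rw [hψ, mul_comm]⟩
      apply MvPolynomial.ext
      intro m
      rw [lieDP_diag_coeff, MvPolynomial.coeff_zero]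
      rcases eq_or_ne (MvPolynomial.coeff m ψ) 0 with h0 | h0
      · rw [h0, mul_zero]
      · have hc : MvPolynomial.coeff (m + Finsupp.single i 1) (g i)
            = MvPolynomial.coeff m ψ := by
          rw [hψ, mul_comm, MvPolynomial.coeff_mul_X]
        have := hco i (m + Finsupp.single i 1) (by rw [hc]; exact h0)
        rw [sum_add_single] at this
        have hz : (∑ k, (m k : ℂ) * μ k) = 0 := by linear_combination this
        rw [hz, zero_mul]
    choose φ h1 h2 using hdvd
    exact ⟨φ, h1, h2⟩
  · -- freeness
    intro φ _ hzero i
    have := hzero i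
    rcases mul_eq_zero.mp this with h | h
    · exact h
    · exact absurd h (MvPolynomial.X_ne_zero i)
end
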